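/- arXiv:2303.02349 — 6 statements merged into one kernel-verified Lean document; each statement's English description precedes it below -/
import Mathlib

section
/- Let Γ be a finite simple graph and d ≥ 1 an integer. For a subset C of the vertices of Γ with at least two elements, let d_Γ(C) denote the minimum of the graph distances d_Γ(x,y) over all pairs of distinct vertices x, y ∈ C. Then the set of cardinalities {|C| : C ⊆ V(Γ), |C| ≥ 2, d_Γ(C) = d} equals the set of cardinalities {|C| : C ⊆ V(Γ), |C| ≥ 2, d_Γ(C) ≥ d}. In particular, if there is a code of size N and minimum distance at least d in which every pair of code vertices is joined by a path, then there is a code of size N and minimum distance exactly d. -/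
open SimpleGraph

private lemma aux_dist_le_add_one {V : Type*} {G : SimpleGraph V} {z y' y : V}
    (h : G.Reachable z y') (ha : G.Adj y' y) : G.dist z y ≤ G.dist z y' + 1 := by
  obtain ⟨p, hp⟩ := h.exists_walk_length_eq_dist
  have := SimpleGraph.dist_le (p.concat ha)
  rwa [SimpleGraph.Walk.length_concat, hp] at this

private lemma aux_exists_adj {V : Type*} {G : SimpleGraph V} {x y : V} {n : ℕ}
    (h : G.dist x y = n + 1) : ∃ y', G.Adj y' y ∧ G.dist x y' = n := by
  have hyx : G.dist y x = n + 1 := by rw [SimpleGraph.dist_comm]; exact h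
  have hr : G.Reachable y x := SimpleGraph.Reachable.of_dist_ne_zero (by omega)
  obtain ⟨q, hq⟩ := hr.exists_walk_length_eq_dist
  rw [hyx] at hq
  cases q with
  | nil => simp at hq
  | cons ha q' =>
    rename_i w
    refine ⟨w, ha.symm, ?_⟩
    have h1 : G.dist x w ≤ n := by
      have := SimpleGraph.dist_le q'.reverse
      simp at hq
      simpa [hq] using this
    have h2 : G.dist x y ≤ G.dist x w + 1 := by
      exact aux_dist_le_add_one ⟨q'.reverse⟩ ha.symm
    omega

/-- For a finite simple graph `G` and `d ≥ 1`, the set of cardinalities of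
codes (of size ≥ 2, with all pairs of code vertices reachable) whose minimum distance is
exactly `d` equals the set of cardinalities of such codes with minimum distance at least `d`. -/
theorem graphical_codes_min_dist_exact_iff_at_least
    {V : Type*} [Fintype V] (G : SimpleGraph V) (d : ℕ) (hd : 1 ≤ d) :
    {N : ℕ | ∃ C : Finset V, 2 ≤ C.card ∧
        (∀ x ∈ C, ∀ y ∈ C, x ≠ y → G.Reachable x y) ∧
        (∀ x ∈ C, ∀ y ∈ C, x ≠ y → d ≤ G.dist x y) ∧
        (∃ x ∈ C, ∃ y ∈ C, x ≠ y ∧ G.dist x y = d) ∧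
        C.card = N}
      =
    {N : ℕ | ∃ C : Finset V, 2 ≤ C.card ∧
        (∀ x ∈ C, ∀ y ∈ C, x ≠ y → G.Reachable x y) ∧
        (∀ x ∈ C, ∀ y ∈ C, x ≠ y → d ≤ G.dist x y) ∧
        C.card = N} := by
  classical
  have key : ∀ m : ℕ, ∀ C : Finset V, 2 ≤ C.card →
      (∀ x ∈ C, ∀ y ∈ C, x ≠ y → G.Reachable x y) →
      (∀ x ∈ C, ∀ y ∈ C, x ≠ y → d ≤ G.dist x y) →
      (∃ x ∈ C, ∃ y ∈ C, x ≠ y ∧ G.dist x y ≤ m) →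
      ∃ C' : Finset V, 2 ≤ C'.card ∧
        (∀ x ∈ C', ∀ y ∈ C', x ≠ y → G.Reachable x y) ∧
        (∀ x ∈ C', ∀ y ∈ C', x ≠ y → d ≤ G.dist x y) ∧
        (∃ x ∈ C', ∃ y ∈ C', x ≠ y ∧ G.dist x y = d) ∧
        C'.card = C.card := by
    intro m
    induction m with
    | zero =>
      intro C hcard hre hge ⟨x, hx, y, hy, hxy, hle⟩
      have := hge x hx y hy hxy
      omega
    | succ m ih =>
      intro C hcard hre hge ⟨x0, hx0, y0, hy0, hxy0, hle0⟩
      -- minimal pair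
      have hne : (C.offDiag).Nonempty := by
        obtain ⟨a, ha, b, hb, hab⟩ := Finset.one_lt_card.mp (by omega : 1 < C.card)
        exact ⟨(a, b), Finset.mem_offDiag.mpr ⟨ha, hb, hab⟩⟩
      obtain ⟨⟨x, y⟩, hmemp, hmin⟩ :=
        Finset.exists_min_image C.offDiag (fun p => G.dist p.1 p.2) hne
      rw [Finset.mem_offDiag] at hmemp
      obtain ⟨hx, hy, hxy⟩ := hmemp
      have hmin' : ∀ a ∈ C, ∀ b ∈ C, a ≠ b → G.dist x y ≤ G.dist a b := by
        intro a ha b hb hab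
        exact hmin (a, b) (Finset.mem_offDiag.mpr ⟨ha, hb, hab⟩)
      have hged : d ≤ G.dist x y := hge x hx y hy hxy
      by_cases hcase : G.dist x y = d
      · exact ⟨C, hcard, hre, hge, ⟨x, hx, y, hy, hxy, hcase⟩, rfl⟩
      · have hgt : d + 1 ≤ G.dist x y := by omega
        obtain ⟨n, hn⟩ : ∃ n, G.dist x y = n + 1 := ⟨G.dist x y - 1, by omega⟩
        have hnd : d ≤ n := by omega
        obtain ⟨y', hadj, hdy'⟩ := aux_exists_adj hn
        have hy'ne : ∀ z ∈ C, z ≠ y → d ≤ G.dist z y' ∧ G.dist x y ≤ G.dist z y' + 1 := by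
          intro z hz hzy
          have hrz : G.Reachable z y' :=
            (hre z hz y hy hzy).trans hadj.symm.reachable
          have htr : G.dist z y ≤ G.dist z y' + 1 := aux_dist_le_add_one hrz hadj
          have := hmin' z hz y hy hzy
          exact ⟨by omega, by omega⟩
        have hy'notC : y' ∉ C.erase y := by
          intro hmem
          rw [Finset.mem_erase] at hmem
          obtain ⟨hy'y, hy'C⟩ := hmem
          by_cases hxy' : y' = x
          · subst hxy'; simp [SimpleGraph.dist_self] at hdy'; omega
          · have := hmin' x hx y' hy'C (fun h => hxy' h.symm)
            omega
        set C' : Finset V := insert y' (C.erase y) with hC'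
        have hxney : x ≠ y' := by
          intro h; subst h; simp [SimpleGraph.dist_self] at hdy'; omega
        have hxC' : x ∈ C' := by
          rw [hC', Finset.mem_insert, Finset.mem_erase]
          exact Or.inr ⟨hxy, hx⟩
        have hcardC' : C'.card = C.card := by
          rw [hC', Finset.card_insert_of_notMem hy'notC, Finset.card_erase_of_mem hy]
          omega
        have hmemC' : ∀ z ∈ C', z = y' ∨ (z ∈ C ∧ z ≠ y) := by
          intro z hz
          rw [hC', Finset.mem_insert, Finset.mem_erase] at hz
          tauto
        have hreC' : ∀ a ∈ C', ∀ b ∈ C', a ≠ b → G.Reachable a b := by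
          intro a ha b hb hab
          rcases hmemC' a ha with rfl | ⟨haC, hay⟩
          · rcases hmemC' b hb with rfl | ⟨hbC, hby⟩
            · exact absurd rfl hab
            · exact hadj.reachable.trans (hre y hy b hbC (Ne.symm hby))
          · rcases hmemC' b hb with rfl | ⟨hbC, hby⟩
            · exact ((hre a haC y hy hay).trans hadj.symm.reachable)
            · exact hre a haC b hbC hab
        have hgeC' : ∀ a ∈ C', ∀ b ∈ C', a ≠ b → d ≤ G.dist a b := by
          intro a ha b hb hab
          rcases hmemC' a ha with rfl | ⟨haC, hay⟩
          · rcases hmemC' b hb with rfl | ⟨hbC, hby⟩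
            · exact absurd rfl hab
            · rw [SimpleGraph.dist_comm]; exact (hy'ne b hbC hby).1
          · rcases hmemC' b hb with rfl | ⟨hbC, hby⟩
            · exact (hy'ne a haC hay).1
            · exact hge a haC b hbC hab
        have hpair : ∃ a ∈ C', ∃ b ∈ C', a ≠ b ∧ G.dist a b ≤ m := by
          refine ⟨x, hxC', y', Finset.mem_insert_self _ _, hxney, ?_⟩
          have : G.dist x y ≤ m + 1 := le_trans (hmin' x0 hx0 y0 hy0 hxy0) hle0
          omega
        obtain ⟨C'', h1, h2, h3, h4, h5⟩ := ih C' (by omega) hreC' hgeC' hpair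
        exact ⟨C'', h1, h2, h3, h4, by omega⟩
  ext N
  simp only [Set.mem_setOf_eq]
  constructor
  · rintro ⟨C, h1, h2, h3, _, h5⟩
    exact ⟨C, h1, h2, h3, h5⟩
  · rintro ⟨C, h1, h2, h3, h5⟩
    obtain ⟨x, hx, y, hy, hxy⟩ := Finset.one_lt_card.mp (by omega : 1 < C.card)
    obtain ⟨C', hc1, hc2, hc3, hc4, hc5⟩ :=
      key (G.dist x y) C h1 h2 h3 ⟨x, hx, y, hy, hxy, le_refl _⟩
    exact ⟨C', hc1, hc2, hc3, hc4, by omega⟩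
end

section
/- Let n ≥ 3, let H = Stab_{S_n}(1) be the stabilizer of the point 1 in the symmetric group S_n (the Young subgroup corresponding to the partition (n−1,1)), let S = {(i,i+1) : 1 ≤ i ≤ n−1} be the set of adjacent transpositions and T = S ∪ {ξ}, and for i ∈ [n] let (1,i) denote the transposition swapping 1 and i (with (1,1) = ξ). Then for all i, j ∈ [n]: |T ∩ (1,i)H(1,j)| equals n−1 if i = j ∈ {1, n}; equals n−2 if i = j and 2 ≤ i ≤ n−1; equals 1 if |i−j| = 1; and equals 0 otherwise. Hence the matrix (|T ∩ (1,i)H(1,j)|)_{i,j} is the n×n tridiagonal matrix with diagonal (n−1, n−2, …, n−2, n−1) and all sub- and super-diagonal entries equal to 1. -/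
/-- The set of adjacent transpositions `(i, i+1)`, `1 ≤ i ≤ n−1`, in `S_n`
(realized on `Fin n`, with the point `k ∈ [n]` corresponding to the index `k−1`). -/
def adjTranspositions (n : ℕ) : Set (Equiv.Perm (Fin n)) :=
  {σ | ∃ i : ℕ, ∃ h : i + 1 < n, σ = Equiv.swap ⟨i, Nat.lt_of_succ_lt h⟩ ⟨i + 1, h⟩}

open Finset

/-- Auxiliary total function giving the adjacent transposition `(k, k+1)`. -/
def adjSwap (n k : ℕ) : Equiv.Perm (Fin n) :=
  if h : k + 1 < n then Equiv.swap ⟨k, Nat.lt_of_succ_lt h⟩ ⟨k + 1, h⟩ else 1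

lemma adjSwap_of_lt {n k : ℕ} (h : k + 1 < n) :
    adjSwap n k = Equiv.swap ⟨k, Nat.lt_of_succ_lt h⟩ ⟨k + 1, h⟩ := by
  simp [adjSwap, h]

lemma swap_apply_iff {n k : ℕ} (h : k + 1 < n) (i j : Fin n) :
    Equiv.swap (⟨k, Nat.lt_of_succ_lt h⟩ : Fin n) ⟨k + 1, h⟩ j = i ↔
      ((j : ℕ) = k ∧ (i : ℕ) = k + 1) ∨ ((j : ℕ) = k + 1 ∧ (i : ℕ) = k) ∨
      ((j : ℕ) ≠ k ∧ (j : ℕ) ≠ k + 1 ∧ (i : ℕ) = (j : ℕ)) := by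
  rw [Equiv.swap_apply_def]
  split_ifs with h1 h2
  · rw [Fin.ext_iff] at h1 ⊢
    simp only [Fin.val_mk] at h1 ⊢
    omega
  · rw [Fin.ext_iff] at h1 h2 ⊢
    simp only [Fin.val_mk] at h1 h2 ⊢
    omega
  · rw [Fin.ext_iff] at h1 h2 ⊢
    simp only [Fin.val_mk] at h1 h2 ⊢
    omega

lemma adjSwap_ne_one {n k : ℕ} (h : k + 1 < n) : adjSwap n k ≠ 1 := by
  rw [adjSwap_of_lt h]
  intro he
  have := (swap_apply_iff h ⟨k, Nat.lt_of_succ_lt h⟩ ⟨k, Nat.lt_of_succ_lt h⟩).mp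
    (by rw [he]; rfl)
  simp only [Fin.val_mk] at this
  omega

lemma adjTranspositions_eq (n : ℕ) :
    adjTranspositions n = ↑((range (n - 1)).image (adjSwap n)) := by
  ext σ
  simp only [adjTranspositions, Set.mem_setOf_eq, coe_image, Set.mem_image, mem_coe,
    mem_range]
  constructor
  · rintro ⟨k, h, rfl⟩
    exact ⟨k, by omega, (adjSwap_of_lt h)⟩
  · rintro ⟨k, hk, rfl⟩
    have h : k + 1 < n := by omega
    exact ⟨k, h, (adjSwap_of_lt h)⟩

lemma count_nat (n a b : ℕ) (hn : 3 ≤ n) (ha : a < n) (hb : b < n) :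
    ((range (n - 1)).filter (fun k =>
        (b = k ∧ a = k + 1) ∨ (b = k + 1 ∧ a = k) ∨ (b ≠ k ∧ b ≠ k + 1 ∧ a = b))).card
    = if a = b then (if a = 0 ∨ a = n - 1 then n - 2 else n - 3)
      else if a + 1 = b ∨ b + 1 = a then 1 else 0 := by
  rcases eq_or_ne a b with rfl | hab
  · rw [if_pos rfl]
    rcases eq_or_ne a 0 with rfl | h0
    · rw [if_pos (Or.inl rfl)]
      have heq : (range (n - 1)).filter (fun k =>
          ((0:ℕ) = k ∧ (0:ℕ) = k + 1) ∨ ((0:ℕ) = k + 1 ∧ (0:ℕ) = k) ∨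
          ((0:ℕ) ≠ k ∧ (0:ℕ) ≠ k + 1 ∧ (0:ℕ) = 0)) = Finset.Ico 1 (n - 1) := by
        ext k; simp only [mem_filter, mem_range, mem_Ico, and_true, true_and]; omega
      rw [heq, Nat.card_Ico]; omega
    rcases eq_or_ne a (n - 1) with rfl | hn1
    · rw [if_pos (Or.inr rfl)]
      have heq : (range (n - 1)).filter (fun k =>
          (n - 1 = k ∧ n - 1 = k + 1) ∨ (n - 1 = k + 1 ∧ n - 1 = k) ∨
          (n - 1 ≠ k ∧ n - 1 ≠ k + 1 ∧ n - 1 = n - 1)) = range (n - 2) := by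
        ext k; simp only [mem_filter, mem_range, and_true, true_and]; omega
      rw [heq, card_range]
    · rw [if_neg (by omega)]
      have hsub : ({a - 1, a} : Finset ℕ) ⊆ range (n - 1) := by
        intro k hk; simp only [mem_insert, mem_singleton] at hk
        simp only [mem_range]; omega
      have heq : (range (n - 1)).filter (fun k =>
          (a = k ∧ a = k + 1) ∨ (a = k + 1 ∧ a = k) ∨
          (a ≠ k ∧ a ≠ k + 1 ∧ a = a)) = range (n - 1) \ {a - 1, a} := by
        ext k
        simp only [mem_filter, mem_range, mem_sdiff, mem_insert, mem_singleton,
          and_true, true_and]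
        omega
      rw [heq, card_sdiff_of_subset hsub, card_range]
      rw [card_insert_of_notMem (by simp only [mem_singleton]; omega), card_singleton]
      omega
  · rw [if_neg hab]
    rcases eq_or_ne (a + 1) b with hb1 | hb1
    · rw [if_pos (Or.inl hb1)]
      have heq : (range (n - 1)).filter (fun k =>
          (b = k ∧ a = k + 1) ∨ (b = k + 1 ∧ a = k) ∨
          (b ≠ k ∧ b ≠ k + 1 ∧ a = b)) = {a} := by
        ext k
        simp only [mem_filter, mem_range, mem_singleton]
        omega
      rw [heq, card_singleton]
    rcases eq_or_ne (b + 1) a with ha1 | ha1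
    · rw [if_pos (Or.inr ha1)]
      have heq : (range (n - 1)).filter (fun k =>
          (b = k ∧ a = k + 1) ∨ (b = k + 1 ∧ a = k) ∨
          (b ≠ k ∧ b ≠ k + 1 ∧ a = b)) = {b} := by
        ext k
        simp only [mem_filter, mem_range, mem_singleton]
        omega
      rw [heq, card_singleton]
    · rw [if_neg (by omega)]
      have heq : (range (n - 1)).filter (fun k =>
          (b = k ∧ a = k + 1) ∨ (b = k + 1 ∧ a = k) ∨
          (b ≠ k ∧ b ≠ k + 1 ∧ a = b)) = ∅ := by
        ext k
        simp only [mem_filter, mem_range, notMem_empty, iff_false]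
        omega
      rw [heq, card_empty]

/-- for `n ≥ 3`, `H = Stab_{S_n}(1)` (the Young subgroup of the partition
`(n−1,1)`), `T` the set of adjacent transpositions together with the identity, and
`(1,i)` the transposition swapping the point `1` and the point `i` (so `(1,1) = ξ`),
the quantity `|T ∩ (1,i) H (1,j)|` equals `n−1` if `i = j` is an endpoint, `n−2` if
`i = j` is interior, `1` if `|i−j| = 1`, and `0` otherwise: the tridiagonal matrix. -/
theorem young_subgroup_coset_matrix (n : ℕ) (hn : 3 ≤ n) (i j : Fin n) :
    Nat.card
      ((adjTranspositions n ∪ {1}) ∩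
        {σ : Equiv.Perm (Fin n) |
          ∃ h ∈ MulAction.stabilizer (Equiv.Perm (Fin n)) (⟨0, by omega⟩ : Fin n),
            σ = Equiv.swap (⟨0, by omega⟩ : Fin n) i * h *
                  Equiv.swap (⟨0, by omega⟩ : Fin n) j} : Set (Equiv.Perm (Fin n)))
      =
    if i = j then
      (if (i : ℕ) = 0 ∨ (i : ℕ) = n - 1 then n - 1 else n - 2)
    else if (i : ℕ) + 1 = (j : ℕ) ∨ (j : ℕ) + 1 = (i : ℕ) then 1 else 0 := by
  have h0 : (0 : ℕ) < n := by omega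
  set z : Fin n := ⟨0, h0⟩ with hz
  -- The coset set is exactly the set of permutations sending j to i.
  have hcoset : {σ : Equiv.Perm (Fin n) |
      ∃ h ∈ MulAction.stabilizer (Equiv.Perm (Fin n)) z,
        σ = Equiv.swap z i * h * Equiv.swap z j} = {σ | σ j = i} := by
    ext σ
    simp only [Set.mem_setOf_eq]
    constructor
    · rintro ⟨h, hh, rfl⟩
      rw [MulAction.mem_stabilizer_iff, Equiv.Perm.smul_def] at hh
      simp [Equiv.Perm.mul_apply, Equiv.swap_apply_right, hh, Equiv.swap_apply_left]
    · intro hσ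
      refine ⟨Equiv.swap z i * σ * Equiv.swap z j, ?_, ?_⟩
      · rw [MulAction.mem_stabilizer_iff, Equiv.Perm.smul_def]
        simp [Equiv.Perm.mul_apply, Equiv.swap_apply_right, hσ, Equiv.swap_apply_left]
      · simp [mul_assoc, Equiv.swap_mul_self, Equiv.swap_mul_self_mul]
  rw [hcoset, adjTranspositions_eq]
  -- Express the whole set as a finset.
  have hfin : ((↑((range (n - 1)).image (adjSwap n)) ∪ {1}) ∩ {σ | σ j = i}
      : Set (Equiv.Perm (Fin n)))
      = ↑((insert 1 ((range (n - 1)).image (adjSwap n))).filter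
          (fun σ => σ j = i)) := by
    rw [coe_filter]
    ext σ
    simp only [Set.mem_inter_iff, Set.mem_union, Set.mem_singleton_iff, mem_coe,
      mem_insert, Set.mem_setOf_eq]
    tauto
  rw [hfin, Nat.card_coe_set_eq, Set.ncard_coe_finset]
  rw [filter_insert, filter_image]
  have hone : (1 : Equiv.Perm (Fin n)) ∉
      ((range (n - 1)).filter (fun a => adjSwap n a j = i)).image (adjSwap n) := by
    simp only [mem_image, mem_filter, mem_range, not_exists]
    rintro k ⟨⟨hk, -⟩, hk1⟩
    exact adjSwap_ne_one (show k + 1 < n by omega) hk1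
  have hinj : Set.InjOn (adjSwap n)
      ↑((range (n - 1)).filter (fun a => adjSwap n a j = i)) := by
    intro k hk l hl he
    simp only [coe_filter, Set.mem_setOf_eq, mem_range] at hk hl
    have hkn : k + 1 < n := by omega
    have hln : l + 1 < n := by omega
    rw [adjSwap_of_lt hkn, adjSwap_of_lt hln] at he
    have happ : Equiv.swap (⟨l, Nat.lt_of_succ_lt hln⟩ : Fin n) ⟨l + 1, hln⟩
        ⟨k, Nat.lt_of_succ_lt hkn⟩ = ⟨k + 1, hkn⟩ := by
      rw [← he, Equiv.swap_apply_left]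
    have := (swap_apply_iff hln _ _).mp happ
    simp only [Fin.val_mk] at this
    omega
  have hfilt : (range (n - 1)).filter (fun a => adjSwap n a j = i)
      = (range (n - 1)).filter (fun k =>
          ((j : ℕ) = k ∧ (i : ℕ) = k + 1) ∨ ((j : ℕ) = k + 1 ∧ (i : ℕ) = k) ∨
          ((j : ℕ) ≠ k ∧ (j : ℕ) ≠ k + 1 ∧ (i : ℕ) = (j : ℕ))) := by
    apply filter_congr
    intro k hk
    simp only [mem_range] at hk
    have hkn : k + 1 < n := by omega
    rw [adjSwap_of_lt hkn]
    simp [swap_apply_iff hkn i j]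
  have hcount := count_nat n (i : ℕ) (j : ℕ) hn i.isLt j.isLt
  rcases eq_or_ne i j with rfl | hij
  · rw [if_pos (show (1 : Equiv.Perm (Fin n)) i = i from rfl), if_pos rfl,
      card_insert_of_notMem hone, card_image_of_injOn hinj, hfilt, hcount,
      if_pos rfl]
    split_ifs <;> omega
  · have h1 : ¬ ((1 : Equiv.Perm (Fin n)) j = i) := by
      simp only [Equiv.Perm.one_apply]
      exact fun h => hij h.symm
    have h2 : ¬ ((i : ℕ) = (j : ℕ)) := fun h => hij (Fin.ext h)
    rw [if_neg h1, if_neg hij, card_image_of_injOn hinj, hfilt, hcount, if_neg h2]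
end

section
/- Let p ≥ 7 be a prime and let M be the p×p tridiagonal integer matrix with diagonal entries M_{11} = M_{pp} = p−1, M_{ii} = p−2 for 2 ≤ i ≤ p−1, sub- and super-diagonal entries equal to 1, and all other entries 0. If x₁,…,x_p are non-negative integers satisfying M(x₁,…,x_p)ᵗ ≤ (p−1)!·𝟏 (entrywise), then the number of indices i ∈ [p] with p·x_i ≤ (p−1)! is at least ⌈p/3⌉. -/
open scoped BigOperators

/-- The `p×p` tridiagonal matrix with diagonal `(p−1, p−2, …, p−2, p−1)`,
sub- and super-diagonal entries `1`, and all other entries `0`. -/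
def triMatrix (p : ℕ) (i j : Fin p) : ℕ :=
  if (i : ℕ) = (j : ℕ) then
    (if (i : ℕ) = 0 ∨ (i : ℕ) = p - 1 then p - 1 else p - 2)
  else if (i : ℕ) + 1 = (j : ℕ) ∨ (j : ℕ) + 1 = (i : ℕ) then 1 else 0

lemma triMatrix_mk (p i j : ℕ) (hi : i < p) (hj : j < p) :
    triMatrix p ⟨i, hi⟩ ⟨j, hj⟩ =
      if i = j then (if i = 0 ∨ i = p - 1 then p - 1 else p - 2)
      else if i + 1 = j ∨ j + 1 = i then 1 else 0 := rfl

lemma no_two_big {p F a b : ℕ} (hp : 7 ≤ p)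
    (hrow : (p - 1) * a + b ≤ F) (ha : F < p * a) (hb : F < p * b) : False := by
  obtain ⟨q, rfl⟩ : ∃ q, p = q + 1 := ⟨p - 1, by omega⟩
  have h2 : q + 1 - 1 = q := by omega
  rw [h2] at hrow
  have h1 : (q + 1) * (q * a + b) ≤ (q + 1) * F := Nat.mul_le_mul_left _ hrow
  have e : (q + 1) * (q * a + b) = q * ((q + 1) * a) + (q + 1) * b := by ring
  have ha' : q * (F + 1) ≤ q * ((q + 1) * a) := Nat.mul_le_mul_left _ ha
  have e2 : q * (F + 1) + (F + 1) = (q + 1) * F + (q + 1) := by ring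
  linarith

lemma no_three_big {p F a b c : ℕ} (hp : 7 ≤ p)
    (hrow : a + (p - 2) * b + c ≤ F) (ha : F < p * a) (hb : F < p * b)
    (hc : F < p * c) : False := by
  obtain ⟨q, rfl⟩ : ∃ q, p = q + 3 := ⟨p - 3, by omega⟩
  have h2 : q + 3 - 2 = q + 1 := by omega
  rw [h2] at hrow
  have h1 : (q + 3) * (a + (q + 1) * b + c) ≤ (q + 3) * F := Nat.mul_le_mul_left _ hrow
  have e : (q + 3) * (a + (q + 1) * b + c)
      = (q + 3) * a + (q + 1) * ((q + 3) * b) + (q + 3) * c := by ring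
  have hb' : (q + 1) * (F + 1) ≤ (q + 1) * ((q + 3) * b) := Nat.mul_le_mul_left _ hb
  have e2 : (F + 1) + (q + 1) * (F + 1) + (F + 1) = (q + 3) * F + (q + 3) := by ring
  linarith

def blockLo (p n k : ℕ) : ℕ :=
  if k = 0 then 0 else if k = n - 1 then p - 2 else 3 * k - 1

def blockHi (p n k : ℕ) : ℕ :=
  if k = 0 then 1 else if k = n - 1 then p - 1 else 3 * k + 1

/-- for a prime `p ≥ 7` and non-negative integers `x₁,…,x_p` with
`M x ≤ (p−1)!·𝟏` entrywise, the number of indices `i` with `p·xᵢ ≤ (p−1)!`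
is at least `⌈p/3⌉`. -/
theorem tridiagonal_system_small_entries (p : ℕ) (hp : p.Prime) (hp7 : 7 ≤ p)
    (x : Fin p → ℕ)
    (hx : ∀ i : Fin p, ∑ j : Fin p, triMatrix p i j * x j ≤ Nat.factorial (p - 1)) :
    ⌈(p : ℚ) / 3⌉₊ ≤
      (Finset.univ.filter fun i : Fin p => p * x i ≤ Nat.factorial (p - 1)).card := by
  classical
  set F := Nat.factorial (p - 1) with hFdef
  set n : ℕ := (p + 2) / 3 with hn
  have hn3 : 3 ≤ n := by omega
  have h3n : 3 * n ≤ p + 2 := by omega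
  have hceil : ⌈(p : ℚ) / 3⌉₊ ≤ n := by
    rw [Nat.ceil_le, div_le_iff₀ (by norm_num : (0:ℚ) < 3)]
    exact_mod_cast (by omega : p ≤ n * 3)
  refine hceil.trans ?_
  -- row 0
  have row0 : (p - 1) * x ⟨0, by omega⟩ + x ⟨1, by omega⟩ ≤ F := by
    have hab : (⟨0, by omega⟩ : Fin p) ≠ ⟨1, by omega⟩ := by
      simp only [ne_eq, Fin.mk.injEq]; omega
    have hsum : ∑ j ∈ ({⟨0, by omega⟩, ⟨1, by omega⟩} : Finset (Fin p)),
        triMatrix p ⟨0, by omega⟩ j * x j ≤ F :=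
      (Finset.sum_le_sum_of_subset (Finset.subset_univ _)).trans (hx _)
    rw [Finset.sum_pair hab, triMatrix_mk, triMatrix_mk,
      if_pos rfl, if_pos (Or.inl rfl), if_neg (by omega), if_pos (by omega),
      one_mul] at hsum
    exact hsum
  -- row p - 1
  have rowlast : (p - 1) * x ⟨p - 1, by omega⟩ + x ⟨p - 2, by omega⟩ ≤ F := by
    have hab : (⟨p - 2, by omega⟩ : Fin p) ≠ ⟨p - 1, by omega⟩ := by
      simp only [ne_eq, Fin.mk.injEq]; omega
    have hsum : ∑ j ∈ ({⟨p - 2, by omega⟩, ⟨p - 1, by omega⟩} : Finset (Fin p)),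
        triMatrix p ⟨p - 1, by omega⟩ j * x j ≤ F :=
      (Finset.sum_le_sum_of_subset (Finset.subset_univ _)).trans (hx _)
    rw [Finset.sum_pair hab, triMatrix_mk, triMatrix_mk,
      if_neg (by omega), if_pos (by omega), if_pos rfl, if_pos (Or.inr rfl),
      one_mul] at hsum
    linarith
  -- interior rows
  have interior : ∀ (i : ℕ) (h1 : 1 ≤ i) (h2 : i ≤ p - 2),
      x ⟨i - 1, by omega⟩ + (p - 2) * x ⟨i, by omega⟩ + x ⟨i + 1, by omega⟩ ≤ F := by
    intro i h1 h2
    have him : i - 1 < p := by omega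
    have hip : i < p := by omega
    have hip1 : i + 1 < p := by omega
    have hab : (⟨i - 1, him⟩ : Fin p) ≠ ⟨i, hip⟩ := by
      simp only [ne_eq, Fin.mk.injEq]; omega
    have hac : (⟨i - 1, him⟩ : Fin p) ≠ ⟨i + 1, hip1⟩ := by
      simp only [ne_eq, Fin.mk.injEq]; omega
    have hbc : (⟨i, hip⟩ : Fin p) ≠ ⟨i + 1, hip1⟩ := by
      simp only [ne_eq, Fin.mk.injEq]; omega
    have hnm : (⟨i - 1, him⟩ : Fin p) ∉ ({⟨i, hip⟩, ⟨i + 1, hip1⟩} : Finset (Fin p)) := by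
      simp only [Finset.mem_insert, Finset.mem_singleton]; push_neg; exact ⟨hab, hac⟩
    have e1 : triMatrix p ⟨i, hip⟩ ⟨i - 1, him⟩ = 1 := by
      rw [triMatrix_mk]
      rw [if_neg (by omega : ¬ i = i - 1)]
      rw [if_pos (by omega : i + 1 = i - 1 ∨ i - 1 + 1 = i)]
    have e2 : triMatrix p ⟨i, hip⟩ ⟨i, hip⟩ = p - 2 := by
      rw [triMatrix_mk]
      rw [if_pos rfl]
      rw [if_neg (by omega : ¬ (i = 0 ∨ i = p - 1))]
    have e3 : triMatrix p ⟨i, hip⟩ ⟨i + 1, hip1⟩ = 1 := by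
      rw [triMatrix_mk]
      rw [if_neg (by omega : ¬ i = i + 1)]
      rw [if_pos (Or.inl rfl : i + 1 = i + 1 ∨ i + 1 + 1 = i)]
    have hsum : ∑ j ∈ ({⟨i - 1, him⟩, ⟨i, hip⟩, ⟨i + 1, hip1⟩} :
        Finset (Fin p)), triMatrix p ⟨i, hip⟩ j * x j ≤ F :=
      (Finset.sum_le_sum_of_subset (Finset.subset_univ _)).trans (hx _)
    rw [Finset.sum_insert hnm, Finset.sum_pair hbc, e1, e2, e3, one_mul, one_mul] at hsum
    linarith
  -- block bounds
  have hdisj : ∀ k l : ℕ, k < l → l < n → blockHi p n k < blockLo p n l := by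
    intro k l h1 h2
    simp only [blockLo, blockHi]
    split_ifs <;> omega
  have key : ∀ k : ℕ, k < n → ∃ i : Fin p,
      p * x i ≤ F ∧ blockLo p n k ≤ (i : ℕ) ∧ (i : ℕ) ≤ blockHi p n k := by
    intro k hk
    by_cases hk0 : k = 0
    · subst hk0
      by_cases hA : p * x ⟨0, by omega⟩ ≤ F
      · exact ⟨⟨0, by omega⟩, hA, by simp only [blockLo]; split_ifs <;> omega, by simp only [blockHi]; split_ifs <;> omega⟩
      · by_cases hB : p * x ⟨1, by omega⟩ ≤ F
        · exact ⟨⟨1, by omega⟩, hB, by simp only [blockLo]; split_ifs <;> omega, by simp only [blockHi]; split_ifs <;> omega⟩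
        · exact absurd row0 (fun h => no_two_big hp7 h (lt_of_not_ge hA) (lt_of_not_ge hB))
    · by_cases hk1 : k = n - 1
      · subst hk1
        by_cases hA : p * x ⟨p - 1, by omega⟩ ≤ F
        · refine ⟨⟨p - 1, by omega⟩, hA, ?_, ?_⟩
          · simp only [blockLo]; split_ifs <;> omega
          · simp only [blockHi]; split_ifs <;> omega
        · by_cases hB : p * x ⟨p - 2, by omega⟩ ≤ F
          · refine ⟨⟨p - 2, by omega⟩, hB, ?_, ?_⟩
            · simp only [blockLo]; split_ifs <;> omega
            · simp only [blockHi]; split_ifs <;> omega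
          · exact absurd rowlast
              (fun h => no_two_big hp7 h (lt_of_not_ge hA) (lt_of_not_ge hB))
      · have h1 : 1 ≤ 3 * k := by omega
        have h2 : 3 * k ≤ p - 2 := by omega
        have hrow := interior (3 * k) h1 h2
        by_cases hA : p * x ⟨3 * k - 1, by omega⟩ ≤ F
        · refine ⟨⟨3 * k - 1, by omega⟩, hA, ?_, ?_⟩
          · simp only [blockLo]; split_ifs <;> omega
          · simp only [blockHi]; split_ifs <;> omega
        · by_cases hB : p * x ⟨3 * k, by omega⟩ ≤ F
          · refine ⟨⟨3 * k, by omega⟩, hB, ?_, ?_⟩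
            · simp only [blockLo]; split_ifs <;> omega
            · simp only [blockHi]; split_ifs <;> omega
          · by_cases hC : p * x ⟨3 * k + 1, by omega⟩ ≤ F
            · refine ⟨⟨3 * k + 1, by omega⟩, hC, ?_, ?_⟩
              · simp only [blockLo]; split_ifs <;> omega
              · simp only [blockHi]; split_ifs <;> omega
            · exact absurd hrow (fun h => no_three_big hp7 h
                (lt_of_not_ge hA) (lt_of_not_ge hB) (lt_of_not_ge hC))
  have key' : ∀ k : ℕ, ∃ i : Fin p, k < n →
      p * x i ≤ F ∧ blockLo p n k ≤ (i : ℕ) ∧ (i : ℕ) ≤ blockHi p n k := by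
    intro k
    by_cases hk : k < n
    · obtain ⟨i, hi⟩ := key k hk
      exact ⟨i, fun _ => hi⟩
    · exact ⟨⟨0, by omega⟩, fun h => absurd h hk⟩
  choose g hg using key'
  calc n = (Finset.range n).card := (Finset.card_range n).symm
    _ ≤ (Finset.univ.filter fun i : Fin p => p * x i ≤ F).card := by
        apply Finset.card_le_card_of_injOn g
        · intro k hk
          rw [Finset.coe_range, Set.mem_Iio] at hk
          have := (hg k hk).1
          simp [Finset.mem_filter, this]
        · intro a ha b hb hab
          simp only [Finset.coe_range, Set.mem_Iio] at ha hb
          have hA := hg a ha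
          have hB := hg b hb
          have hval : ((g a : ℕ)) = ((g b : ℕ)) := by rw [hab]
          rcases lt_trichotomy a b with h | h | h
          · have := hdisj a b h hb; omega
          · exact h
          · have := hdisj b a h ha; omega
end

section
/- Let p ≥ 7 be a prime and let M be the p×p tridiagonal integer matrix with diagonal entries M_{11} = M_{pp} = p−1, M_{ii} = p−2 for 2 ≤ i ≤ p−1, sub- and super-diagonal entries equal to 1, and all other entries 0. Let x₁,…,x_p be non-negative integers satisfying M(x₁,…,x_p)ᵗ ≤ (p−1)!·𝟏, let x_max = max{x_i : i ∈ [p]}, and suppose ∑_{i=1}^p x_i = (p−1)! − k for an integer k ≥ 0. Then the number of indices i with x_i = x_max is at least p − k − 2. -/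
open scoped BigOperators

lemma triMatrix_off (p : ℕ) (i j : Fin p) (h : (i : ℕ) ≠ (j : ℕ))
    (h2 : (i : ℕ) + 1 = (j : ℕ) ∨ (j : ℕ) + 1 = (i : ℕ)) : triMatrix p i j = 1 := by
  unfold triMatrix; rw [if_neg h, if_pos h2]

lemma triMatrix_diag_int (p : ℕ) (i : Fin p) (h : ¬((i : ℕ) = 0 ∨ (i : ℕ) = p - 1)) :
    triMatrix p i i = p - 2 := by
  unfold triMatrix; rw [if_pos rfl, if_neg h]

lemma triMatrix_diag_bd (p : ℕ) (i : Fin p) (h : (i : ℕ) = 0 ∨ (i : ℕ) = p - 1) :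
    triMatrix p i i = p - 1 := by
  unfold triMatrix; rw [if_pos rfl, if_pos h]

lemma pm_split (p m : ℕ) (hp : 2 ≤ p) : (p - 1) * m = (p - 2) * m + m := by
  have h : p - 1 = (p - 2) + 1 := by omega
  rw [h, add_mul, one_mul]

lemma triMatrix_key (p : ℕ) (hp7 : 7 ≤ p) (x : Fin p → ℕ) (m : ℕ)
    (hle : ∀ j, x j ≤ m) (i : Fin p) (hxi : x i = m) :
    ∃ a b : Fin p, a ≠ b ∧
      (p - 2) * m + x a + x b ≤ ∑ j : Fin p, triMatrix p i j * x j := by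
  have hiv := i.isLt
  rcases Nat.lt_trichotomy 0 (i : ℕ) with h0 | h0 | h0
  · rcases Nat.lt_trichotomy ((i : ℕ)) (p - 1) with h1 | h1 | h1
    · -- interior case
      refine ⟨⟨(i : ℕ) - 1, by omega⟩, ⟨(i : ℕ) + 1, by omega⟩,
        Fin.ne_of_val_ne (by simp only [Fin.val_mk]; omega), ?_⟩
      set a : Fin p := ⟨(i : ℕ) - 1, by omega⟩ with ha
      set b : Fin p := ⟨(i : ℕ) + 1, by omega⟩ with hb
      have hav : (a : ℕ) = (i : ℕ) - 1 := rfl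
      have hbv : (b : ℕ) = (i : ℕ) + 1 := rfl
      have hab : a ≠ b := Fin.ne_of_val_ne (by omega)
      have hai : a ≠ i := Fin.ne_of_val_ne (by omega)
      have hib : i ≠ b := Fin.ne_of_val_ne (by omega)
      have hsub : ({a, i, b} : Finset (Fin p)) ⊆ Finset.univ := Finset.subset_univ _
      have hs := Finset.sum_le_sum_of_subset (f := fun j => triMatrix p i j * x j) hsub
      have hmem : a ∉ ({i, b} : Finset (Fin p)) := by simp [hai, hab]
      rw [Finset.sum_insert hmem, Finset.sum_pair hib] at hs
      have e1 : triMatrix p i a = 1 := triMatrix_off p i a (by omega) (by omega)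
      have e2 : triMatrix p i i = p - 2 := triMatrix_diag_int p i (by omega)
      have e3 : triMatrix p i b = 1 := triMatrix_off p i b (by omega) (by omega)
      rw [e1, e2, e3, one_mul, one_mul, hxi] at hs
      calc (p - 2) * m + x a + x b = x a + ((p - 2) * m + x b) := by ring
        _ ≤ _ := hs
    · -- i = p - 1
      refine ⟨⟨p - 3, by omega⟩, ⟨p - 2, by omega⟩,
        Fin.ne_of_val_ne (by simp only [Fin.val_mk]; omega), ?_⟩
      set a : Fin p := ⟨p - 3, by omega⟩ with ha
      set b : Fin p := ⟨p - 2, by omega⟩ with hb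
      have hav : (a : ℕ) = p - 3 := rfl
      have hbv : (b : ℕ) = p - 2 := rfl
      have hbi : b ≠ i := Fin.ne_of_val_ne (by omega)
      have hsub : ({b, i} : Finset (Fin p)) ⊆ Finset.univ := Finset.subset_univ _
      have hs := Finset.sum_le_sum_of_subset (f := fun j => triMatrix p i j * x j) hsub
      rw [Finset.sum_pair hbi] at hs
      have e2 : triMatrix p i i = p - 1 := triMatrix_diag_bd p i (by omega)
      have e3 : triMatrix p i b = 1 := triMatrix_off p i b (by omega) (by omega)
      rw [e2, e3, one_mul, hxi] at hs
      have hxa := hle a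
      have hq : (p - 2) * m + x a + x b ≤ x b + (p - 1) * m := by
        rw [pm_split p m (by omega)]; omega
      exact hq.trans hs
    · omega
  · -- i = 0
    refine ⟨⟨2, by omega⟩, ⟨1, by omega⟩,
      Fin.ne_of_val_ne (by simp only [Fin.val_mk]; omega), ?_⟩
    set a : Fin p := ⟨2, by omega⟩ with ha
    set b : Fin p := ⟨1, by omega⟩ with hb
    have hav : (a : ℕ) = 2 := rfl
    have hbv : (b : ℕ) = 1 := rfl
    have hib : i ≠ b := Fin.ne_of_val_ne (by omega)
    have hsub : ({i, b} : Finset (Fin p)) ⊆ Finset.univ := Finset.subset_univ _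
    have hs := Finset.sum_le_sum_of_subset (f := fun j => triMatrix p i j * x j) hsub
    rw [Finset.sum_pair hib] at hs
    have e2 : triMatrix p i i = p - 1 := triMatrix_diag_bd p i (by omega)
    have e3 : triMatrix p i b = 1 := triMatrix_off p i b (by omega) (by omega)
    rw [e2, e3, one_mul, hxi] at hs
    have hxa := hle a
    have hq : (p - 2) * m + x a + x b ≤ (p - 1) * m + x b := by
      rw [pm_split p m (by omega)]; omega
    exact hq.trans hs
  · omega

/-- for a prime `p ≥ 7` and non-negative integers `x₁,…,x_p` with
`M x ≤ (p−1)!·𝟏` entrywise and `∑ xᵢ = (p−1)! − k` (i.e. `∑ xᵢ + k = (p−1)!`),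
the number of indices `i` with `xᵢ = x_max` is at least `p − k − 2`. -/
theorem tridiagonal_system_max_entries (p : ℕ) (hp : p.Prime) (hp7 : 7 ≤ p)
    (x : Fin p → ℕ)
    (hx : ∀ i : Fin p, ∑ j : Fin p, triMatrix p i j * x j ≤ Nat.factorial (p - 1))
    (k : ℕ) (hk : (∑ i : Fin p, x i) + k = Nat.factorial (p - 1)) :
    p - k - 2 ≤
      (Finset.univ.filter fun i : Fin p => x i = Finset.univ.sup x).card := by
  set m := Finset.univ.sup x with hm
  have hne : (Finset.univ : Finset (Fin p)).Nonempty := ⟨⟨0, by omega⟩, Finset.mem_univ _⟩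
  obtain ⟨i, -, hxi⟩ := Finset.exists_mem_eq_sup Finset.univ hne x
  have hle : ∀ j, x j ≤ m := fun j => Finset.le_sup (Finset.mem_univ j)
  obtain ⟨a, b, hab, hkey⟩ := triMatrix_key p hp7 x m hle i hxi.symm
  have h1 : (p - 2) * m + x a + x b ≤ Nat.factorial (p - 1) := hkey.trans (hx i)
  set S : Finset (Fin p) := (Finset.univ.erase a).erase b with hS
  have hScard : S.card = p - 2 := by
    rw [hS, Finset.card_erase_of_mem (Finset.mem_erase.mpr ⟨hab.symm, Finset.mem_univ _⟩),
      Finset.card_erase_of_mem (Finset.mem_univ _)]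
    simp
    omega
  have hSsum : ∑ j ∈ S, x j + x b + x a = ∑ j : Fin p, x j := by
    rw [hS, Finset.sum_erase_add _ _ (Finset.mem_erase.mpr ⟨hab.symm, Finset.mem_univ _⟩),
      Finset.sum_erase_add _ _ (Finset.mem_univ _)]
  have hdsum : ∑ j ∈ S, (m - x j) + ∑ j ∈ S, x j = S.card * m := by
    rw [← Finset.sum_add_distrib]
    rw [Finset.sum_congr rfl (fun j _ => Nat.sub_add_cancel (hle j))]
    simp [mul_comm]
  rw [hScard] at hdsum
  have hdk : ∑ j ∈ S, (m - x j) ≤ k := by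
    set M := (p - 2) * m with hM
    omega
  set T := S.filter (fun j => ¬ x j = m) with hT
  have hTcard : T.card ≤ k := by
    calc T.card = ∑ j ∈ T, 1 := by simp
      _ ≤ ∑ j ∈ T, (m - x j) := by
          apply Finset.sum_le_sum
          intro j hj
          rw [hT, Finset.mem_filter] at hj
          have := hle j
          omega
      _ ≤ ∑ j ∈ S, (m - x j) := Finset.sum_le_sum_of_subset (Finset.filter_subset _ _)
      _ ≤ k := hdk
  have hpart : (S.filter (fun j => x j = m)).card + T.card = S.card :=
    Finset.card_filter_add_card_filter_not (fun j => x j = m)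
  have hmono : (S.filter (fun j => x j = m)).card ≤
      (Finset.univ.filter (fun j => x j = m)).card :=
    Finset.card_le_card (Finset.filter_subset_filter _ (Finset.subset_univ S))
  omega
end

section
/- Let p ≥ 7 be a prime and let M be the p×p tridiagonal integer matrix with diagonal entries M_{11} = M_{pp} = p−1, M_{ii} = p−2 for 2 ≤ i ≤ p−1, sub- and super-diagonal entries equal to 1, and all other entries 0. If x₁,…,x_p are non-negative integers satisfying M(x₁,…,x_p)ᵗ ≤ (p−1)!·𝟏, then ∑_{i=1}^p x_i ≤ (p−1)! − ⌈p/3⌉ + 2. -/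
open scoped BigOperators

lemma tri_eval (p a b : ℕ) (ha : a < p) (hb : b < p) :
    triMatrix p ⟨a, ha⟩ ⟨b, hb⟩ =
      if a = b then (if a = 0 ∨ a = p - 1 then p - 1 else p - 2)
      else if a + 1 = b ∨ b + 1 = a then 1 else 0 := rfl

/-- Core combinatorial lemma: integers `e 0, …, e (p-1)` (vanishing from `p` on)
satisfying the tridiagonal inequalities have sum at least `p/3`. -/
lemma core_sum_bound (p : ℕ) (hp5 : 7 ≤ p) (e : ℕ → ℤ)
    (h0 : ∀ j, p ≤ j → e j = 0)
    (hA : 1 ≤ ((p : ℤ) - 1) * e 0 + e 1)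
    (hB : ∀ m, m + 2 < p → 1 ≤ e m + ((p : ℤ) - 2) * e (m + 1) + e (m + 2))
    (hC : 1 ≤ e (p - 2) + ((p : ℤ) - 1) * e (p - 1)) :
    (p : ℤ) ≤ 3 * ∑ k ∈ Finset.range p, e k := by
  classical
  obtain ⟨r, hr⟩ : ∃ r, p = r + 2 := ⟨p - 2, by omega⟩
  have hr5 : 5 ≤ r := by omega
  set P : ℕ → ℤ := fun j => max (e j) 0 with hPdef
  set Ng : ℕ → ℤ := fun j => max (-e j) 0 with hNdef
  set L : ℕ → ℤ := fun k => if k = 0 then 0 else P (k - 1) with hLdef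
  have hP0 : ∀ j, 0 ≤ P j := fun j => le_max_right _ _
  have hN0 : ∀ j, 0 ≤ Ng j := fun j => le_max_right _ _
  have hEP : ∀ j, e j ≤ P j := fun j => le_max_left _ _
  have hPN : ∀ j, P j - Ng j = e j := fun j => max_zero_sub_max_neg_zero_eq_self (e j)
  -- pointwise claim
  have claim : ∀ k, k < p → 1 + ((p : ℤ) - 2) * Ng k ≤ L k + P k + P (k + 1) := by
    intro k hk
    by_cases hsign : e k ≤ 0
    · have hng : Ng k = -e k := max_eq_left (by simpa using hsign)
      have hpk : P k = 0 := max_eq_right hsign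
      rcases Nat.eq_zero_or_pos k with hk0 | hkpos
      · subst hk0
        have hL : L 0 = 0 := by simp [hLdef]
        have h1 : e 1 ≤ P 1 := hEP 1
        have hne : 0 ≤ -e 0 := by linarith
        rw [hL, hpk, hng]
        nlinarith [hA, hEP 1]
      · by_cases hklast : k = r + 1
        · subst hklast
          have hL : L (r + 1) = P r := by simp [hLdef]
          have hp2 : p - 2 = r := by omega
          have hp1 : p - 1 = r + 1 := by omega
          rw [hp2, hp1] at hC
          rw [hL, hpk, hng]
          nlinarith [hC, hEP r, hP0 (r + 2), hN0 (r + 1)]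
        · obtain ⟨m, hm⟩ : ∃ m, k = m + 1 := ⟨k - 1, by omega⟩
          have hmlt : m + 2 < p := by omega
          have hB' := hB m hmlt
          subst hm
          have hL : L (m + 1) = P m := by simp [hLdef]
          rw [hL, hpk, hng]
          nlinarith [hB', hEP m, hEP (m + 2), hN0 (m + 1)]
    · push_neg at hsign
      have h1 : 1 ≤ e k := hsign
      have hng : Ng k = 0 := max_eq_right (by linarith)
      have hpk : 1 ≤ P k := le_trans h1 (hEP k)
      rw [hng]
      have := hP0 (k + 1)
      have hL : 0 ≤ L k := by
        by_cases h : k = 0 <;> simp [hLdef, h, hP0]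
      linarith
  -- sum the claim
  have hsumL : ∑ k ∈ Finset.range p, L k ≤ ∑ k ∈ Finset.range p, P k := by
    have h1 : ∑ k ∈ Finset.range p, L k = ∑ k ∈ Finset.range (r + 1), P k := by
      rw [hr]
      rw [Finset.sum_range_succ']
      have : ∀ i, L (i + 1) = P i := fun i => by simp [hLdef]
      simp [this, hLdef]
    have h2 : ∑ k ∈ Finset.range p, P k = ∑ k ∈ Finset.range (r + 1), P k + P (r + 1) := by
      rw [hr, Finset.sum_range_succ]
    rw [h1, h2]
    linarith [hP0 (r + 1)]
  have hsumR : ∑ k ∈ Finset.range p, P (k + 1) ≤ ∑ k ∈ Finset.range p, P k := by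
    have hPp : P p = 0 := by
      have : e p = 0 := h0 p le_rfl
      simp [hPdef, this]
    have h1 : ∑ k ∈ Finset.range (p + 1), P k = (∑ k ∈ Finset.range p, P (k + 1)) + P 0 :=
      Finset.sum_range_succ' P p
    have h2 : ∑ k ∈ Finset.range (p + 1), P k = ∑ k ∈ Finset.range p, P k + P p :=
      Finset.sum_range_succ P p
    have := hP0 0
    rw [hPp] at h2
    linarith [h1, h2]
  have hmain : (p : ℤ) + ((p : ℤ) - 2) * ∑ k ∈ Finset.range p, Ng k
      ≤ 3 * ∑ k ∈ Finset.range p, P k := by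
    have h1 : ∑ k ∈ Finset.range p, (1 + ((p : ℤ) - 2) * Ng k)
        ≤ ∑ k ∈ Finset.range p, (L k + P k + P (k + 1)) :=
      Finset.sum_le_sum fun k hk => claim k (Finset.mem_range.mp hk)
    rw [Finset.sum_add_distrib, Finset.sum_const, Finset.card_range, ← Finset.mul_sum] at h1
    rw [Finset.sum_add_distrib, Finset.sum_add_distrib] at h1
    simp only [nsmul_eq_mul, mul_one] at h1
    linarith [hsumL, hsumR]
  have hsub : ∑ k ∈ Finset.range p, e k
      = ∑ k ∈ Finset.range p, P k - ∑ k ∈ Finset.range p, Ng k := by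
    rw [← Finset.sum_sub_distrib]
    exact (Finset.sum_congr rfl fun k _ => (hPN k).symm)
  have hNsum : 0 ≤ ∑ k ∈ Finset.range p, Ng k :=
    Finset.sum_nonneg fun k _ => hN0 k
  have hp7 : (7 : ℤ) ≤ (p : ℤ) := by exact_mod_cast hp5
  nlinarith [hmain, hsub, hNsum]

/-- for a prime `p ≥ 7` and non-negative integers `x₁,…,x_p` with
`M x ≤ (p−1)!·𝟏` entrywise, `∑ xᵢ ≤ (p−1)! − ⌈p/3⌉ + 2`. -/
theorem tridiagonal_system_sum_bound (p : ℕ) (hp : p.Prime) (hp7 : 7 ≤ p)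
    (x : Fin p → ℕ)
    (hx : ∀ i : Fin p, ∑ j : Fin p, triMatrix p i j * x j ≤ Nat.factorial (p - 1)) :
    ∑ i : Fin p, x i ≤ Nat.factorial (p - 1) - ⌈(p : ℚ) / 3⌉₊ + 2 := by
  classical
  haveI : Fact p.Prime := ⟨hp⟩
  set N := Nat.factorial (p - 1) with hN
  obtain ⟨r, hr⟩ : ∃ r, p = r + 2 := ⟨p - 2, by omega⟩
  have hr5 : 5 ≤ r := by omega
  -- Wilson's lemma
  have hdvd : p ∣ N + 1 := by
    have hw : (((p - 1).factorial : ℕ) : ZMod p) = -1 := ZMod.wilsons_lemma p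
    have h0 : ((N + 1 : ℕ) : ZMod p) = 0 := by
      push_cast
      rw [hN]
      push_cast [hw]
      ring
    exact (ZMod.natCast_eq_zero_iff _ _).mp h0
  obtain ⟨q, hq⟩ := hdvd
  have hqZ : ((N : ℤ) + 1) = (p : ℤ) * q := by exact_mod_cast hq
  -- row inequalities
  have hrow : ∀ (s : Finset (Fin p)) (i : Fin p),
      (∑ j ∈ s, triMatrix p i j * x j) ≤ N :=
    fun s i => le_trans (Finset.sum_le_sum_of_subset (Finset.subset_univ s)) (hx i)
  set E : ℕ → ℤ := fun j => if h : j < p then (q : ℤ) - x ⟨j, h⟩ else 0 with hEdef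
  have hEeq : ∀ j (h : j < p), E j = (q : ℤ) - x ⟨j, h⟩ := fun j h => dif_pos h
  have hE0 : ∀ j, p ≤ j → E j = 0 := fun j h => dif_neg (by omega)
  -- left end row
  have hA' : 1 ≤ ((p : ℤ) - 1) * E 0 + E 1 := by
    have h0 : (0 : ℕ) < p := by omega
    have h1 : (1 : ℕ) < p := by omega
    have hsum := hrow {⟨0, h0⟩, ⟨1, h1⟩} ⟨0, h0⟩
    rw [Finset.sum_insert (by simp [Fin.ext_iff]), Finset.sum_singleton] at hsum
    have e1 : triMatrix p ⟨0, h0⟩ ⟨0, h0⟩ = p - 1 := by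
      rw [tri_eval, if_pos (rfl : (0:ℕ) = 0), if_pos (Or.inl rfl : (0:ℕ) = 0 ∨ 0 = p - 1)]
    have e2 : triMatrix p ⟨0, h0⟩ ⟨1, h1⟩ = 1 := by
      rw [tri_eval, if_neg (by omega : ¬(0:ℕ) = 1), if_pos (Or.inl rfl : (0:ℕ) + 1 = 1 ∨ 1 + 1 = (0:ℕ))]
    rw [e1, e2, one_mul] at hsum
    have hcast : ((p : ℤ) - 1) * (x ⟨0, h0⟩ : ℤ) + (x ⟨1, h1⟩ : ℤ) ≤ (N : ℤ) := by
      have hz := (Nat.cast_le (α := ℤ)).mpr hsum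
      push_cast [Nat.cast_sub (show 1 ≤ p by omega)] at hz
      linarith
    rw [hEeq 0 h0, hEeq 1 h1]
    have hexp : ((p : ℤ) - 1) * ((q : ℤ) - (x ⟨0, h0⟩ : ℤ)) + ((q : ℤ) - (x ⟨1, h1⟩ : ℤ))
        = (p : ℤ) * q - (((p : ℤ) - 1) * (x ⟨0, h0⟩ : ℤ) + (x ⟨1, h1⟩ : ℤ)) := by ring
    rw [hexp]
    linarith [hqZ, hcast]
  -- interior rows
  have hB' : ∀ m, m + 2 < p → 1 ≤ E m + ((p : ℤ) - 2) * E (m + 1) + E (m + 2) := by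
    intro m hm
    have h0 : m < p := by omega
    have h1 : m + 1 < p := by omega
    have hsum := hrow {⟨m, h0⟩, ⟨m + 1, h1⟩, ⟨m + 2, hm⟩} ⟨m + 1, h1⟩
    rw [Finset.sum_insert (by simp [Fin.ext_iff]), Finset.sum_insert (by simp [Fin.ext_iff]),
      Finset.sum_singleton] at hsum
    have e1 : triMatrix p ⟨m + 1, h1⟩ ⟨m, h0⟩ = 1 := by
      rw [tri_eval, if_neg (by omega : ¬m + 1 = m), if_pos (Or.inr rfl : m + 1 + 1 = m ∨ m + 1 = m + 1)]
    have e2 : triMatrix p ⟨m + 1, h1⟩ ⟨m + 1, h1⟩ = p - 2 := by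
      rw [tri_eval, if_pos (rfl : m + 1 = m + 1), if_neg (by omega : ¬(m + 1 = 0 ∨ m + 1 = p - 1))]
    have e3 : triMatrix p ⟨m + 1, h1⟩ ⟨m + 2, hm⟩ = 1 := by
      rw [tri_eval, if_neg (by omega : ¬m + 1 = m + 2), if_pos (Or.inl rfl : m + 1 + 1 = m + 2 ∨ m + 2 + 1 = m + 1)]
    rw [e1, e2, e3, one_mul, one_mul] at hsum
    have hcast : (x ⟨m, h0⟩ : ℤ) + ((p : ℤ) - 2) * (x ⟨m + 1, h1⟩ : ℤ)
        + (x ⟨m + 2, hm⟩ : ℤ) ≤ (N : ℤ) := by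
      have hz := (Nat.cast_le (α := ℤ)).mpr hsum
      push_cast [Nat.cast_sub (show 2 ≤ p by omega)] at hz
      linarith
    rw [hEeq m h0, hEeq (m + 1) h1, hEeq (m + 2) hm]
    have hexp : ((q : ℤ) - (x ⟨m, h0⟩ : ℤ)) + ((p : ℤ) - 2) * ((q : ℤ) - (x ⟨m + 1, h1⟩ : ℤ))
        + ((q : ℤ) - (x ⟨m + 2, hm⟩ : ℤ))
        = (p : ℤ) * q - ((x ⟨m, h0⟩ : ℤ) + ((p : ℤ) - 2) * (x ⟨m + 1, h1⟩ : ℤ)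
            + (x ⟨m + 2, hm⟩ : ℤ)) := by ring
    rw [hexp]
    linarith [hqZ, hcast]
  -- right end row
  have hC' : 1 ≤ E (p - 2) + ((p : ℤ) - 1) * E (p - 1) := by
    have h0 : r < p := by omega
    have h1 : r + 1 < p := by omega
    have hsum := hrow {⟨r, h0⟩, ⟨r + 1, h1⟩} ⟨r + 1, h1⟩
    rw [Finset.sum_insert (by simp [Fin.ext_iff]), Finset.sum_singleton] at hsum
    have e1 : triMatrix p ⟨r + 1, h1⟩ ⟨r, h0⟩ = 1 := by
      rw [tri_eval, if_neg (by omega : ¬r + 1 = r), if_pos (Or.inr rfl : r + 1 + 1 = r ∨ r + 1 = r + 1)]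
    have e2 : triMatrix p ⟨r + 1, h1⟩ ⟨r + 1, h1⟩ = p - 1 := by
      rw [tri_eval, if_pos (rfl : r + 1 = r + 1), if_pos (Or.inr (by omega) : r + 1 = 0 ∨ r + 1 = p - 1)]
    rw [e1, e2, one_mul] at hsum
    have hcast : (x ⟨r, h0⟩ : ℤ) + ((p : ℤ) - 1) * (x ⟨r + 1, h1⟩ : ℤ) ≤ (N : ℤ) := by
      have hz := (Nat.cast_le (α := ℤ)).mpr hsum
      push_cast [Nat.cast_sub (show 1 ≤ p by omega)] at hz
      linarith
    rw [show p - 2 = r from by omega, show p - 1 = r + 1 from by omega,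
      hEeq r h0, hEeq (r + 1) h1]
    have hexp : ((q : ℤ) - (x ⟨r, h0⟩ : ℤ)) + ((p : ℤ) - 1) * ((q : ℤ) - (x ⟨r + 1, h1⟩ : ℤ))
        = (p : ℤ) * q - ((x ⟨r, h0⟩ : ℤ) + ((p : ℤ) - 1) * (x ⟨r + 1, h1⟩ : ℤ)) := by ring
    rw [hexp]
    linarith [hqZ, hcast]
  have hcore := core_sum_bound p hp7 E hE0 hA' hB' hC'
  -- translate the sum
  have hSE : ∑ k ∈ Finset.range p, E k = (p : ℤ) * q - ((∑ i : Fin p, x i : ℕ) : ℤ) := by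
    rw [← Fin.sum_univ_eq_sum_range E p]
    have h1 : ∀ i : Fin p, E (i : ℕ) = (q : ℤ) - (x i : ℤ) := by
      intro i
      rw [hEeq (i : ℕ) i.isLt]
      all_goals simp [Fin.eta]
    rw [Finset.sum_congr rfl fun i _ => h1 i, Finset.sum_sub_distrib, Finset.sum_const,
      Finset.card_univ, Fintype.card_fin, nsmul_eq_mul]
    push_cast
    all_goals ring
  rw [hSE] at hcore
  -- final arithmetic
  have hS : 3 * (∑ i : Fin p, x i) + p ≤ 3 * N + 3 := by
    have hz : (3 : ℤ) * ((∑ i : Fin p, x i : ℕ) : ℤ) + (p : ℤ) ≤ 3 * (N : ℤ) + 3 := by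
      linarith [hcore, hqZ]
    exact_mod_cast hz
  have hceil : ⌈(p : ℚ) / 3⌉₊ ≤ (p + 2) / 3 := by
    apply Nat.ceil_le.mpr
    rw [div_le_iff₀ (by norm_num : (0 : ℚ) < 3)]
    have h : p ≤ (p + 2) / 3 * 3 := by omega
    exact_mod_cast h
  have hpN : p + 2 ≤ N := by
    have h1 : r ≤ r.factorial := Nat.self_le_factorial r
    have h2 : N = (r + 1) * r.factorial := by
      rw [hN, show p - 1 = r + 1 from by omega, Nat.factorial_succ]
    nlinarith [h1, h2, hr5]
  omega
end

section
/- Every subset C of the symmetric group S_17 in which any two distinct permutations have Kendall τ-distance at least 3 satisfies |C| ≤ 16! − 5; that is, P(17,3) ≤ 16! − 5. -/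
/-- `σ` is an adjacent transposition `(i, i+1)` of `S_n` realized on `Fin n`. -/
def IsAdjTransposition {n : ℕ} (σ : Equiv.Perm (Fin n)) : Prop :=
  ∃ i : ℕ, ∃ h : i + 1 < n, σ = Equiv.swap ⟨i, Nat.lt_of_succ_lt h⟩ ⟨i + 1, h⟩

/-- The Kendall τ-distance between two permutations `ρ, π ∈ S_n`: the minimum number of
adjacent transpositions whose product equals `ρπ⁻¹`. -/
noncomputable def kendallDist {n : ℕ} (ρ π : Equiv.Perm (Fin n)) : ℕ :=
  sInf {t : ℕ | ∃ l : List (Equiv.Perm (Fin n)),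
    l.length = t ∧ (∀ s ∈ l, IsAdjTransposition s) ∧ l.prod = ρ * π⁻¹}

namespace PermCode17

abbrev P17 := Equiv.Perm (Fin 17)

/-- The adjacent transposition swapping values `j` and `j+1`. -/
def sw (j : Fin 16) : P17 :=
  Equiv.swap ⟨j.1, Nat.lt_succ_of_lt j.2⟩ ⟨j.1 + 1, Nat.succ_lt_succ j.2⟩

lemma isAdj_sw (j : Fin 16) : IsAdjTransposition (sw j) :=
  ⟨j.1, Nat.succ_lt_succ j.2, rfl⟩

lemma sw_inv (j : Fin 16) : (sw j)⁻¹ = sw j := Equiv.swap_inv _ _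

lemma sw_ne_one (j : Fin 16) : sw j ≠ 1 := by
  intro h
  have h2 : sw j ⟨j.1, Nat.lt_succ_of_lt j.2⟩ = ⟨j.1 + 1, Nat.succ_lt_succ j.2⟩ :=
    Equiv.swap_apply_left _ _
  rw [h] at h2
  have := congrArg Fin.val h2
  simp at this

lemma sw_injective : Function.Injective sw := by
  intro i j h
  have hx : sw i ⟨i.1, Nat.lt_succ_of_lt i.2⟩ = sw j ⟨i.1, Nat.lt_succ_of_lt i.2⟩ := by rw [h]
  have hL : sw i ⟨i.1, Nat.lt_succ_of_lt i.2⟩ = ⟨i.1 + 1, Nat.succ_lt_succ i.2⟩ :=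
    Equiv.swap_apply_left _ _
  rcases eq_or_ne i.1 j.1 with hij | hij
  · exact Fin.ext hij
  rcases eq_or_ne i.1 (j.1 + 1) with hij1 | hij1
  · have ha : (⟨i.1, Nat.lt_succ_of_lt i.2⟩ : Fin 17) = ⟨j.1 + 1, Nat.succ_lt_succ j.2⟩ :=
      Fin.ext hij1
    rw [ha] at hx
    have hR : sw j ⟨j.1 + 1, Nat.succ_lt_succ j.2⟩ = ⟨j.1, Nat.lt_succ_of_lt j.2⟩ :=
      Equiv.swap_apply_right _ _
    rw [hR, ← ha, hL] at hx
    have := congrArg Fin.val hx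
    simp only [] at this
    exfalso; omega
  · have hR : sw j ⟨i.1, Nat.lt_succ_of_lt i.2⟩ = ⟨i.1, Nat.lt_succ_of_lt i.2⟩ := by
      apply Equiv.swap_apply_of_ne_of_ne
      · exact Fin.ne_of_val_ne hij
      · exact Fin.ne_of_val_ne hij1
    rw [hL, hR] at hx
    have := congrArg Fin.val hx
    simp only [] at this
    exfalso; omega

/-- The 17 words of length ≤ 1. -/
def ballWords : Finset P17 := insert 1 (Finset.univ.image sw)

lemma one_mem_ballWords : (1 : P17) ∈ ballWords := Finset.mem_insert_self _ _

lemma sw_mem_ballWords (j : Fin 16) : sw j ∈ ballWords :=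
  Finset.mem_insert_of_mem (Finset.mem_image_of_mem _ (Finset.mem_univ j))

lemma mem_ballWords {u : P17} (h : u ∈ ballWords) : u = 1 ∨ ∃ j, u = sw j := by
  rcases Finset.mem_insert.1 h with h | h
  · exact Or.inl h
  · obtain ⟨j, _, rfl⟩ := Finset.mem_image.1 h
    exact Or.inr ⟨j, rfl⟩

lemma kendallDist_le_word (x y : P17) (l : List P17)
    (hl : ∀ s ∈ l, IsAdjTransposition s) (hp : l.prod = x * y⁻¹) :
    kendallDist x y ≤ l.length :=
  Nat.sInf_le ⟨l, rfl, hl, hp⟩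

/-- two distinct codewords cannot have intersecting balls -/
lemma conflict {σ σ' : P17} {u v : P17} (hu : u ∈ ballWords) (hv : v ∈ ballWords)
    (h : u * σ = v * σ') (hne : σ ≠ σ') : kendallDist σ σ' ≤ 2 := by
  have key : σ * σ'⁻¹ = u⁻¹ * v := by
    have : σ = u⁻¹ * (v * σ') := by rw [← h]; group
    rw [this]; group
  rcases mem_ballWords hu with rfl | ⟨j, rfl⟩ <;> rcases mem_ballWords hv with rfl | ⟨i, rfl⟩
  · exfalso
    apply hne
    have : σ * σ'⁻¹ = 1 := by simpa using key
    have := congrArg (· * σ') this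
    simpa [mul_assoc] using this
  · have h1 : kendallDist σ σ' ≤ 1 := by
      apply kendallDist_le_word σ σ' [sw i]
      · intro s hs; simp at hs; subst hs; exact isAdj_sw i
      · simpa using key.symm
    omega
  · have h1 : kendallDist σ σ' ≤ 1 := by
      apply kendallDist_le_word σ σ' [sw j]
      · intro s hs; simp at hs; subst hs; exact isAdj_sw j
      · rw [key, sw_inv]; simp
    omega
  · apply kendallDist_le_word σ σ' [sw j, sw i]
    · intro s hs; simp at hs; rcases hs with rfl | rfl
      · exact isAdj_sw j
      · exact isAdj_sw i
    · rw [key, sw_inv]; simp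

/-- number of permutations with a given value at position 0 -/
lemma card_fiber (v : Fin 17) :
    ((Finset.univ : Finset P17).filter (fun π => π 0 = v)).card = Nat.factorial 16 := by
  have hbij : ∀ v w : Fin 17,
      ((Finset.univ : Finset P17).filter (fun π => π 0 = v)).card =
      ((Finset.univ : Finset P17).filter (fun π => π 0 = w)).card := by
    intro v w
    apply Finset.card_bij' (fun π _ => Equiv.swap v w * π) (fun π _ => Equiv.swap v w * π)
    · intro π hπ
      have := (Finset.mem_filter.1 hπ).2
      refine Finset.mem_filter.2 ⟨Finset.mem_univ _, ?_⟩
      simp only [Equiv.Perm.mul_apply, this, Equiv.swap_apply_left]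
    · intro π hπ
      have := (Finset.mem_filter.1 hπ).2
      refine Finset.mem_filter.2 ⟨Finset.mem_univ _, ?_⟩
      simp only [Equiv.Perm.mul_apply, this, Equiv.swap_apply_right]
    · intro π _
      simp [← mul_assoc, Equiv.swap_mul_self]
    · intro π _
      simp [← mul_assoc, Equiv.swap_mul_self]
  have hsum : (Finset.univ : Finset P17).card =
      ∑ w : Fin 17, ((Finset.univ : Finset P17).filter (fun π => π 0 = w)).card :=
    Finset.card_eq_sum_card_fiberwise (fun π _ => Finset.mem_univ _)
  have hconst : ∑ w : Fin 17, ((Finset.univ : Finset P17).filter (fun π => π 0 = w)).card =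
      17 * ((Finset.univ : Finset P17).filter (fun π => π 0 = v)).card := by
    rw [Finset.sum_congr rfl (fun w _ => hbij w v)]
    simp [Finset.sum_const, Finset.card_univ, mul_comm]
  have hcard : (Finset.univ : Finset P17).card = Nat.factorial 17 := by
    rw [Finset.card_univ]
    simp [Fintype.card_perm]
  have h17 : Nat.factorial 17 = 17 * Nat.factorial 16 := by
    rw [Nat.factorial_succ]
  omega

/-- filter sets used for counting fixed values -/
lemma card_J : ∀ v : Fin 17,
    14 ≤ ((Finset.univ : Finset (Fin 16)).filter
      (fun j => j.1 ≠ v.1 ∧ j.1 + 1 ≠ v.1)).card := by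
  decide

lemma card_J_boundary : ∀ v : Fin 17, (v.1 = 0 ∨ v.1 = 16) →
    15 ≤ ((Finset.univ : Finset (Fin 16)).filter
      (fun j => j.1 ≠ v.1 ∧ j.1 + 1 ≠ v.1)).card := by
  decide

/-- K a v := number of u in ballWords with u a = v ; diagonal lower bound -/
lemma K_self (v : Fin 17) :
    14 + 1 ≤ (ballWords.filter (fun u => u v = v)).card := by
  have hsub : insert (1 : P17) (((Finset.univ : Finset (Fin 16)).filter
      (fun j => j.1 ≠ v.1 ∧ j.1 + 1 ≠ v.1)).image sw) ⊆
      ballWords.filter (fun u => u v = v) := by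
    intro u hu
    rcases Finset.mem_insert.1 hu with rfl | hu
    · exact Finset.mem_filter.2 ⟨one_mem_ballWords, rfl⟩
    · obtain ⟨j, hj, rfl⟩ := Finset.mem_image.1 hu
      obtain ⟨-, hj1, hj2⟩ := Finset.mem_filter.1 hj
      refine Finset.mem_filter.2 ⟨sw_mem_ballWords j, ?_⟩
      exact Equiv.swap_apply_of_ne_of_ne
        (Fin.ne_of_val_ne (fun h => hj1 h.symm))
        (Fin.ne_of_val_ne (fun h => hj2 h.symm))
  have hcard := Finset.card_le_card hsub
  rw [Finset.card_insert_of_notMem, Finset.card_image_of_injective _ sw_injective] at hcard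
  · have := card_J v
    omega
  · intro hmem
    obtain ⟨j, _, hj⟩ := Finset.mem_image.1 hmem
    exact sw_ne_one j hj

lemma K_self_boundary (v : Fin 17) (hv : v.1 = 0 ∨ v.1 = 16) :
    15 + 1 ≤ (ballWords.filter (fun u => u v = v)).card := by
  have hsub : insert (1 : P17) (((Finset.univ : Finset (Fin 16)).filter
      (fun j => j.1 ≠ v.1 ∧ j.1 + 1 ≠ v.1)).image sw) ⊆
      ballWords.filter (fun u => u v = v) := by
    intro u hu
    rcases Finset.mem_insert.1 hu with rfl | hu
    · exact Finset.mem_filter.2 ⟨one_mem_ballWords, rfl⟩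
    · obtain ⟨j, hj, rfl⟩ := Finset.mem_image.1 hu
      obtain ⟨-, hj1, hj2⟩ := Finset.mem_filter.1 hj
      refine Finset.mem_filter.2 ⟨sw_mem_ballWords j, ?_⟩
      exact Equiv.swap_apply_of_ne_of_ne
        (Fin.ne_of_val_ne (fun h => hj1 h.symm))
        (Fin.ne_of_val_ne (fun h => hj2 h.symm))
  have hcard := Finset.card_le_card hsub
  rw [Finset.card_insert_of_notMem, Finset.card_image_of_injective _ sw_injective] at hcard
  · have := card_J_boundary v hv
    omega
  · intro hmem
    obtain ⟨j, _, hj⟩ := Finset.mem_image.1 hmem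
    exact sw_ne_one j hj

/-- a = v + 1 : some word sends a to v -/
lemma K_up {a v : Fin 17} (h : a.1 = v.1 + 1) :
    1 ≤ (ballWords.filter (fun u => u a = v)).card := by
  have hv16 : v.1 < 16 := by omega
  set j : Fin 16 := ⟨v.1, hv16⟩
  refine Finset.card_pos.2 ⟨sw j, Finset.mem_filter.2 ⟨sw_mem_ballWords j, ?_⟩⟩
  have ha : a = ⟨j.1 + 1, Nat.succ_lt_succ j.2⟩ := Fin.ext h
  rw [ha]
  show Equiv.swap _ _ _ = v
  rw [Equiv.swap_apply_right]

/-- a + 1 = v : some word sends a to v -/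
lemma K_down {a v : Fin 17} (h : a.1 + 1 = v.1) :
    1 ≤ (ballWords.filter (fun u => u a = v)).card := by
  have ha16 : a.1 < 16 := by omega
  set j : Fin 16 := ⟨a.1, ha16⟩
  refine Finset.card_pos.2 ⟨sw j, Finset.mem_filter.2 ⟨sw_mem_ballWords j, ?_⟩⟩
  have ha : a = ⟨j.1, Nat.lt_succ_of_lt j.2⟩ := Fin.ext rfl
  rw [ha]
  show Equiv.swap _ _ _ = v
  rw [Equiv.swap_apply_left]
  exact Fin.ext h

/-- The master counting inequality: balls around codewords are disjoint, so within the
fiber `{π : π 0 = v}` the total ball-coverage is at most `16!`. -/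
lemma covered_le (C : Finset P17)
    (hC : ∀ x ∈ C, ∀ y ∈ C, x ≠ y → 3 ≤ kendallDist x y) (v : Fin 17) :
    ∑ σ ∈ C, (ballWords.filter (fun u => u (σ 0) = v)).card ≤ Nat.factorial 16 := by
  classical
  set Bv : P17 → Finset P17 :=
    fun σ => (ballWords.image (fun u => u * σ)).filter (fun π => π 0 = v) with hBv
  have hcardeq : ∀ σ : P17,
      (ballWords.filter (fun u => u (σ 0) = v)).card = (Bv σ).card := by
    intro σ
    rw [hBv]
    simp only []
    rw [Finset.filter_image]
    rw [Finset.card_image_of_injective _ (fun a b hab => mul_right_cancel hab)]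
    congr 1
  have hdisj : ∀ x ∈ C, ∀ y ∈ C, x ≠ y → Disjoint (Bv x) (Bv y) := by
    intro x hx y hy hxy
    rw [Finset.disjoint_left]
    intro π hπx hπy
    obtain ⟨u, hu, hux⟩ := Finset.mem_image.1 (Finset.mem_of_mem_filter π hπx)
    obtain ⟨w, hw, hwy⟩ := Finset.mem_image.1 (Finset.mem_of_mem_filter π hπy)
    have := conflict hu hw (hux.trans hwy.symm) hxy
    have := hC x hx y hy hxy
    omega
  calc ∑ σ ∈ C, (ballWords.filter (fun u => u (σ 0) = v)).card
      = ∑ σ ∈ C, (Bv σ).card := Finset.sum_congr rfl (fun σ _ => hcardeq σ)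
    _ = (C.biUnion Bv).card := (Finset.card_biUnion hdisj).symm
    _ ≤ ((Finset.univ : Finset P17).filter (fun π => π 0 = v)).card := by
        apply Finset.card_le_card
        intro π hπ
        obtain ⟨σ, -, hσ⟩ := Finset.mem_biUnion.1 hπ
        exact Finset.mem_filter.2 ⟨Finset.mem_univ _, (Finset.mem_filter.1 hσ).2⟩
    _ = Nat.factorial 16 := card_fiber v

/-- class counts: number of codewords with value k at position 0 -/
def cc (C : Finset P17) (k : ℕ) : ℕ := (C.filter (fun σ => (σ 0).1 = k)).card

lemma sum_boole_card (C : Finset P17) (p : P17 → Prop) [DecidablePred p] :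
    ∑ σ ∈ C, (if p σ then (1 : ℕ) else 0) = (C.filter p).card := by
  rw [Finset.sum_boole]
  simp

lemma sum_cc (C : Finset P17) : ∑ k ∈ Finset.range 17, cc C k = C.card := by
  have h := Finset.card_eq_sum_card_fiberwise
    (f := fun σ : P17 => σ 0) (s := C) (t := Finset.univ) (fun _ _ => Finset.mem_univ _)
  rw [h, ← Fin.sum_univ_eq_sum_range]
  apply Finset.sum_congr rfl
  intro v _
  unfold cc
  congr 1
  apply Finset.filter_congr
  intro σ _
  simp [Fin.val_inj]

lemma row_int (C : Finset P17)
    (hC : ∀ x ∈ C, ∀ y ∈ C, x ≠ y → 3 ≤ kendallDist x y)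
    (k : ℕ) (hk1 : 1 ≤ k) (hk15 : k ≤ 15) :
    cc C (k - 1) + 15 * cc C k + cc C (k + 1) ≤ Nat.factorial 16 := by
  have hk17 : k < 17 := by omega
  set v : Fin 17 := ⟨k, hk17⟩ with hv
  have hpoint : ∀ σ ∈ C,
      ((if (σ 0).1 + 1 = k then (1:ℕ) else 0) + 15 * (if (σ 0).1 = k then (1:ℕ) else 0)
        + (if (σ 0).1 = k + 1 then (1:ℕ) else 0))
      ≤ (ballWords.filter (fun u => u (σ 0) = v)).card := by
    intro σ _
    rcases eq_or_ne ((σ 0).1 + 1) k with h1 | h1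
    · rw [if_pos h1, if_neg (by omega), if_neg (by omega)]
      simpa using K_down (a := σ 0) (v := v) h1
    rcases eq_or_ne ((σ 0).1) k with h2 | h2
    · rw [if_neg h1, if_pos h2, if_neg (by omega)]
      have hσv : σ 0 = v := Fin.ext h2
      rw [hσv]
      simpa using K_self v
    rcases eq_or_ne ((σ 0).1) (k + 1) with h3 | h3
    · rw [if_neg h1, if_neg h2, if_pos h3]
      simpa using K_up (a := σ 0) (v := v) h3
    · rw [if_neg h1, if_neg h2, if_neg h3]
      exact Nat.zero_le _
  have hsum := Finset.sum_le_sum hpoint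
  have hL : ∑ σ ∈ C,
      ((if (σ 0).1 + 1 = k then (1:ℕ) else 0) + 15 * (if (σ 0).1 = k then (1:ℕ) else 0)
        + (if (σ 0).1 = k + 1 then (1:ℕ) else 0))
      = (C.filter (fun σ => (σ 0).1 + 1 = k)).card + 15 * cc C k + cc C (k + 1) := by
    rw [Finset.sum_add_distrib, Finset.sum_add_distrib, ← Finset.mul_sum]
    rw [sum_boole_card, sum_boole_card, sum_boole_card]
    rfl
  have hm : (C.filter (fun σ => (σ 0).1 + 1 = k)).card = cc C (k - 1) := by
    unfold cc
    congr 1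
    apply Finset.filter_congr
    intro σ _
    constructor
    · intro h; omega
    · intro h; omega
  rw [hL, hm] at hsum
  exact le_trans hsum (covered_le C hC v)

lemma row_zero (C : Finset P17)
    (hC : ∀ x ∈ C, ∀ y ∈ C, x ≠ y → 3 ≤ kendallDist x y) :
    16 * cc C 0 + cc C 1 ≤ Nat.factorial 16 := by
  set v : Fin 17 := ⟨0, by omega⟩ with hv
  have hpoint : ∀ σ ∈ C,
      (16 * (if (σ 0).1 = 0 then (1:ℕ) else 0) + (if (σ 0).1 = 1 then (1:ℕ) else 0))
      ≤ (ballWords.filter (fun u => u (σ 0) = v)).card := by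
    intro σ _
    rcases eq_or_ne ((σ 0).1) 0 with h1 | h1
    · rw [if_pos h1, if_neg (by omega)]
      have hσv : σ 0 = v := Fin.ext h1
      rw [hσv]
      simpa using K_self_boundary v (Or.inl rfl)
    rcases eq_or_ne ((σ 0).1) 1 with h2 | h2
    · rw [if_neg h1, if_pos h2]
      simpa using K_up (a := σ 0) (v := v) h2
    · rw [if_neg h1, if_neg h2]
      exact Nat.zero_le _
  have hsum := Finset.sum_le_sum hpoint
  have hL : ∑ σ ∈ C,
      (16 * (if (σ 0).1 = 0 then (1:ℕ) else 0) + (if (σ 0).1 = 1 then (1:ℕ) else 0))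
      = 16 * cc C 0 + cc C 1 := by
    rw [Finset.sum_add_distrib, ← Finset.mul_sum]
    rw [sum_boole_card, sum_boole_card]
    rfl
  rw [hL] at hsum
  exact le_trans hsum (covered_le C hC v)

lemma row_sixteen (C : Finset P17)
    (hC : ∀ x ∈ C, ∀ y ∈ C, x ≠ y → 3 ≤ kendallDist x y) :
    cc C 15 + 16 * cc C 16 ≤ Nat.factorial 16 := by
  set v : Fin 17 := ⟨16, by omega⟩ with hv
  have hpoint : ∀ σ ∈ C,
      ((if (σ 0).1 = 15 then (1:ℕ) else 0) + 16 * (if (σ 0).1 = 16 then (1:ℕ) else 0))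
      ≤ (ballWords.filter (fun u => u (σ 0) = v)).card := by
    intro σ _
    rcases eq_or_ne ((σ 0).1) 15 with h1 | h1
    · rw [if_pos h1, if_neg (by omega)]
      have : (σ 0).1 + 1 = (16 : ℕ) := by omega
      simpa using K_down (a := σ 0) (v := v) this
    rcases eq_or_ne ((σ 0).1) 16 with h2 | h2
    · rw [if_neg h1, if_pos h2]
      have hσv : σ 0 = v := Fin.ext h2
      rw [hσv]
      simpa using K_self_boundary v (Or.inr rfl)
    · rw [if_neg h1, if_neg h2]
      exact Nat.zero_le _
  have hsum := Finset.sum_le_sum hpoint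
  have hL : ∑ σ ∈ C,
      ((if (σ 0).1 = 15 then (1:ℕ) else 0) + 16 * (if (σ 0).1 = 16 then (1:ℕ) else 0))
      = cc C 15 + 16 * cc C 16 := by
    rw [Finset.sum_add_distrib, ← Finset.mul_sum]
    rw [sum_boole_card, sum_boole_card]
    rfl
  rw [hL] at hsum
  exact le_trans hsum (covered_le C hC v)

/-! ### The integer program.
With `N = 16! = 20922789888000` and `Q = 1230752346353` (so that `17 * Q = N + 1`), each class count
`c k` is decomposed via `Q - c k = ind + ex - ng` where `ind ∈ {0,1}` marks classes with
`c k ≤ Q - 1`, `ex` the excess below, `ng` the deficit above. -/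

lemma decomp (ck : ℕ) : ∃ ind ex ng : ℤ, 0 ≤ ind ∧ 0 ≤ ex ∧ 0 ≤ ng ∧
    (1230752346353 : ℤ) - (ck : ℤ) = ind + ex - ng ∧
    ((ind = 1 ∧ ng = 0 ∧ (ck : ℤ) ≤ 1230752346352) ∨ (ind = 0 ∧ ex = 0 ∧ (1230752346353 : ℤ) ≤ (ck : ℤ))) := by
  rcases le_or_gt (ck : ℤ) 1230752346352 with h | h
  · exact ⟨1, 1230752346352 - (ck : ℤ), 0, by omega, by omega, by omega, by omega,
      Or.inl ⟨rfl, rfl, h⟩⟩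
  · exact ⟨0, 0, (ck : ℤ) - 1230752346353, by omega, by omega, by omega, by omega,
      Or.inr ⟨rfl, rfl, by omega⟩⟩

lemma win3 (na nb nc : ℕ) (ia ib ic : ℤ)
    (hrow : na + 15 * nb + nc ≤ 20922789888000)
    (ha : (ia = 1 ∧ (na : ℤ) ≤ 1230752346352) ∨ (ia = 0 ∧ (1230752346353 : ℤ) ≤ (na : ℤ)))
    (hb : (ib = 1 ∧ (nb : ℤ) ≤ 1230752346352) ∨ (ib = 0 ∧ (1230752346353 : ℤ) ≤ (nb : ℤ)))
    (hc : (ic = 1 ∧ (nc : ℤ) ≤ 1230752346352) ∨ (ic = 0 ∧ (1230752346353 : ℤ) ≤ (nc : ℤ))) :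
    1 ≤ ia + ib + ic := by omega

lemma win0 (na nb : ℕ) (ia ib : ℤ)
    (hrow : 16 * na + nb ≤ 20922789888000)
    (ha : (ia = 1 ∧ (na : ℤ) ≤ 1230752346352) ∨ (ia = 0 ∧ (1230752346353 : ℤ) ≤ (na : ℤ)))
    (hb : (ib = 1 ∧ (nb : ℤ) ≤ 1230752346352) ∨ (ib = 0 ∧ (1230752346353 : ℤ) ≤ (nb : ℤ))) :
    1 ≤ ia + ib := by omega

lemma win16 (na nb : ℕ) (ia ib : ℤ)
    (hrow : na + 16 * nb ≤ 20922789888000)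
    (ha : (ia = 1 ∧ (na : ℤ) ≤ 1230752346352) ∨ (ia = 0 ∧ (1230752346353 : ℤ) ≤ (na : ℤ)))
    (hb : (ib = 1 ∧ (nb : ℤ) ≤ 1230752346352) ∨ (ib = 0 ∧ (1230752346353 : ℤ) ≤ (nb : ℤ))) :
    1 ≤ ia + ib := by omega

/-- charging for an interior deficit: the two neighbours carry 14-fold excess -/
lemma chg3 (na nb nc : ℕ) (ia ea ga ib eb gb ic ec gc : ℤ)
    (hrow : na + 15 * nb + nc ≤ 20922789888000)
    (idA : (1230752346353 : ℤ) - (na : ℤ) = ia + ea - ga)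
    (idB : (1230752346353 : ℤ) - (nb : ℤ) = ib + eb - gb)
    (idC : (1230752346353 : ℤ) - (nc : ℤ) = ic + ec - gc)
    (hA : (ia = 1 ∧ ga = 0 ∧ (na : ℤ) ≤ 1230752346352) ∨ (ia = 0 ∧ ea = 0 ∧ (1230752346353 : ℤ) ≤ (na : ℤ)))
    (hB : (ib = 1 ∧ gb = 0 ∧ (nb : ℤ) ≤ 1230752346352) ∨ (ib = 0 ∧ eb = 0 ∧ (1230752346353 : ℤ) ≤ (nb : ℤ)))
    (hC : (ic = 1 ∧ gc = 0 ∧ (nc : ℤ) ≤ 1230752346352) ∨ (ic = 0 ∧ ec = 0 ∧ (1230752346353 : ℤ) ≤ (nc : ℤ)))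
    (hea : 0 ≤ ea) (hec : 0 ≤ ec) (hga : 0 ≤ ga) (hgc : 0 ≤ gc) :
    14 * gb ≤ ea + ec := by omega

lemma chg0 (na nb : ℕ) (ia ea ga ib eb gb : ℤ)
    (hrow : 16 * na + nb ≤ 20922789888000)
    (idA : (1230752346353 : ℤ) - (na : ℤ) = ia + ea - ga)
    (idB : (1230752346353 : ℤ) - (nb : ℤ) = ib + eb - gb)
    (hA : (ia = 1 ∧ ga = 0 ∧ (na : ℤ) ≤ 1230752346352) ∨ (ia = 0 ∧ ea = 0 ∧ (1230752346353 : ℤ) ≤ (na : ℤ)))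
    (hB : (ib = 1 ∧ gb = 0 ∧ (nb : ℤ) ≤ 1230752346352) ∨ (ib = 0 ∧ eb = 0 ∧ (1230752346353 : ℤ) ≤ (nb : ℤ)))
    (heb : 0 ≤ eb) (hgb : 0 ≤ gb) :
    14 * ga ≤ eb := by omega

lemma chg16 (na nb : ℕ) (ia ea ga ib eb gb : ℤ)
    (hrow : na + 16 * nb ≤ 20922789888000)
    (idA : (1230752346353 : ℤ) - (na : ℤ) = ia + ea - ga)
    (idB : (1230752346353 : ℤ) - (nb : ℤ) = ib + eb - gb)
    (hA : (ia = 1 ∧ ga = 0 ∧ (na : ℤ) ≤ 1230752346352) ∨ (ia = 0 ∧ ea = 0 ∧ (1230752346353 : ℤ) ≤ (na : ℤ)))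
    (hB : (ib = 1 ∧ gb = 0 ∧ (nb : ℤ) ≤ 1230752346352) ∨ (ib = 0 ∧ eb = 0 ∧ (1230752346353 : ℤ) ≤ (nb : ℤ)))
    (hea : 0 ≤ ea) (hga : 0 ≤ ga) :
    14 * gb ≤ ea := by omega


lemma finish (n0 n1 n2 n3 n4 n5 n6 n7 n8 n9 n10 n11 n12 n13 n14 n15 n16 : ℕ) (I E G : ℤ)
    (hI : 6 ≤ I) (hG : 14 * G ≤ 2 * E) (hE : 0 ≤ E) (hGn : 0 ≤ G)
    (hS : (17 * 1230752346353 : ℤ) - ((n0 : ℤ)+(n1 : ℤ)+(n2 : ℤ)+(n3 : ℤ)+(n4 : ℤ)+(n5 : ℤ)+(n6 : ℤ)+(n7 : ℤ)+(n8 : ℤ)+(n9 : ℤ)+(n10 : ℤ)+(n11 : ℤ)+(n12 : ℤ)+(n13 : ℤ)+(n14 : ℤ)+(n15 : ℤ)+(n16 : ℤ)) = I + E - G) :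
    n0+n1+n2+n3+n4+n5+n6+n7+n8+n9+n10+n11+n12+n13+n14+n15+n16 ≤ 20922789888000 - 5 := by omega

lemma ip_bound (c : ℕ → ℕ)
    (h0 : 16 * c 0 + c 1 ≤ 20922789888000)
    (hi : ∀ k, 1 ≤ k → k ≤ 15 → c (k - 1) + 15 * c k + c (k + 1) ≤ 20922789888000)
    (h16 : c 15 + 16 * c 16 ≤ 20922789888000) :
    ∑ k ∈ Finset.range 17, c k ≤ 20922789888000 - 5 := by
  have h1 := hi 1 (by norm_num) (by norm_num)
  have h2 := hi 2 (by norm_num) (by norm_num)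
  have h3 := hi 3 (by norm_num) (by norm_num)
  have h4 := hi 4 (by norm_num) (by norm_num)
  have h5 := hi 5 (by norm_num) (by norm_num)
  have h6 := hi 6 (by norm_num) (by norm_num)
  have h7 := hi 7 (by norm_num) (by norm_num)
  have h8 := hi 8 (by norm_num) (by norm_num)
  have h9 := hi 9 (by norm_num) (by norm_num)
  have h10 := hi 10 (by norm_num) (by norm_num)
  have h11 := hi 11 (by norm_num) (by norm_num)
  have h12 := hi 12 (by norm_num) (by norm_num)
  have h13 := hi 13 (by norm_num) (by norm_num)
  have h14 := hi 14 (by norm_num) (by norm_num)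
  have h15 := hi 15 (by norm_num) (by norm_num)
  norm_num at h1 h2 h3 h4 h5 h6 h7 h8 h9 h10 h11 h12 h13 h14 h15
  obtain ⟨i0, e0, g0, hi0, he0, hg0, hq0, hd0⟩ := decomp (c 0)
  obtain ⟨i1, e1, g1, hi1, he1, hg1, hq1, hd1⟩ := decomp (c 1)
  obtain ⟨i2, e2, g2, hi2, he2, hg2, hq2, hd2⟩ := decomp (c 2)
  obtain ⟨i3, e3, g3, hi3, he3, hg3, hq3, hd3⟩ := decomp (c 3)
  obtain ⟨i4, e4, g4, hi4, he4, hg4, hq4, hd4⟩ := decomp (c 4)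
  obtain ⟨i5, e5, g5, hi5, he5, hg5, hq5, hd5⟩ := decomp (c 5)
  obtain ⟨i6, e6, g6, hi6, he6, hg6, hq6, hd6⟩ := decomp (c 6)
  obtain ⟨i7, e7, g7, hi7, he7, hg7, hq7, hd7⟩ := decomp (c 7)
  obtain ⟨i8, e8, g8, hi8, he8, hg8, hq8, hd8⟩ := decomp (c 8)
  obtain ⟨i9, e9, g9, hi9, he9, hg9, hq9, hd9⟩ := decomp (c 9)
  obtain ⟨i10, e10, g10, hi10, he10, hg10, hq10, hd10⟩ := decomp (c 10)
  obtain ⟨i11, e11, g11, hi11, he11, hg11, hq11, hd11⟩ := decomp (c 11)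
  obtain ⟨i12, e12, g12, hi12, he12, hg12, hq12, hd12⟩ := decomp (c 12)
  obtain ⟨i13, e13, g13, hi13, he13, hg13, hq13, hd13⟩ := decomp (c 13)
  obtain ⟨i14, e14, g14, hi14, he14, hg14, hq14, hd14⟩ := decomp (c 14)
  obtain ⟨i15, e15, g15, hi15, he15, hg15, hq15, hd15⟩ := decomp (c 15)
  obtain ⟨i16, e16, g16, hi16, he16, hg16, hq16, hd16⟩ := decomp (c 16)
  have w0 : 1 ≤ i0 + i1 := win0 (c 0) (c 1) i0 i1 h0 (hd0.imp (fun h => ⟨h.1, h.2.2⟩) (fun h => ⟨h.1, h.2.2⟩)) (hd1.imp (fun h => ⟨h.1, h.2.2⟩) (fun h => ⟨h.1, h.2.2⟩))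
  have w1 : 1 ≤ i2 + i3 + i4 := win3 (c 2) (c 3) (c 4) i2 i3 i4 h3 (hd2.imp (fun h => ⟨h.1, h.2.2⟩) (fun h => ⟨h.1, h.2.2⟩)) (hd3.imp (fun h => ⟨h.1, h.2.2⟩) (fun h => ⟨h.1, h.2.2⟩)) (hd4.imp (fun h => ⟨h.1, h.2.2⟩) (fun h => ⟨h.1, h.2.2⟩))
  have w2 : 1 ≤ i5 + i6 + i7 := win3 (c 5) (c 6) (c 7) i5 i6 i7 h6 (hd5.imp (fun h => ⟨h.1, h.2.2⟩) (fun h => ⟨h.1, h.2.2⟩)) (hd6.imp (fun h => ⟨h.1, h.2.2⟩) (fun h => ⟨h.1, h.2.2⟩)) (hd7.imp (fun h => ⟨h.1, h.2.2⟩) (fun h => ⟨h.1, h.2.2⟩))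
  have w3 : 1 ≤ i8 + i9 + i10 := win3 (c 8) (c 9) (c 10) i8 i9 i10 h9 (hd8.imp (fun h => ⟨h.1, h.2.2⟩) (fun h => ⟨h.1, h.2.2⟩)) (hd9.imp (fun h => ⟨h.1, h.2.2⟩) (fun h => ⟨h.1, h.2.2⟩)) (hd10.imp (fun h => ⟨h.1, h.2.2⟩) (fun h => ⟨h.1, h.2.2⟩))
  have w4 : 1 ≤ i11 + i12 + i13 := win3 (c 11) (c 12) (c 13) i11 i12 i13 h12 (hd11.imp (fun h => ⟨h.1, h.2.2⟩) (fun h => ⟨h.1, h.2.2⟩)) (hd12.imp (fun h => ⟨h.1, h.2.2⟩) (fun h => ⟨h.1, h.2.2⟩)) (hd13.imp (fun h => ⟨h.1, h.2.2⟩) (fun h => ⟨h.1, h.2.2⟩))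
  have w5 : 1 ≤ i14 + i15 + i16 := win3 (c 14) (c 15) (c 16) i14 i15 i16 h15 (hd14.imp (fun h => ⟨h.1, h.2.2⟩) (fun h => ⟨h.1, h.2.2⟩)) (hd15.imp (fun h => ⟨h.1, h.2.2⟩) (fun h => ⟨h.1, h.2.2⟩)) (hd16.imp (fun h => ⟨h.1, h.2.2⟩) (fun h => ⟨h.1, h.2.2⟩))
  have ch0 : 14 * g0 ≤ e1 := chg0 (c 0) (c 1) i0 e0 g0 i1 e1 g1 h0 hq0 hq1 hd0 hd1 he1 hg1
  have ch1 : 14 * g1 ≤ e0 + e2 := chg3 (c 0) (c 1) (c 2) i0 e0 g0 i1 e1 g1 i2 e2 g2 h1 hq0 hq1 hq2 hd0 hd1 hd2 he0 he2 hg0 hg2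
  have ch2 : 14 * g2 ≤ e1 + e3 := chg3 (c 1) (c 2) (c 3) i1 e1 g1 i2 e2 g2 i3 e3 g3 h2 hq1 hq2 hq3 hd1 hd2 hd3 he1 he3 hg1 hg3
  have ch3 : 14 * g3 ≤ e2 + e4 := chg3 (c 2) (c 3) (c 4) i2 e2 g2 i3 e3 g3 i4 e4 g4 h3 hq2 hq3 hq4 hd2 hd3 hd4 he2 he4 hg2 hg4
  have ch4 : 14 * g4 ≤ e3 + e5 := chg3 (c 3) (c 4) (c 5) i3 e3 g3 i4 e4 g4 i5 e5 g5 h4 hq3 hq4 hq5 hd3 hd4 hd5 he3 he5 hg3 hg5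
  have ch5 : 14 * g5 ≤ e4 + e6 := chg3 (c 4) (c 5) (c 6) i4 e4 g4 i5 e5 g5 i6 e6 g6 h5 hq4 hq5 hq6 hd4 hd5 hd6 he4 he6 hg4 hg6
  have ch6 : 14 * g6 ≤ e5 + e7 := chg3 (c 5) (c 6) (c 7) i5 e5 g5 i6 e6 g6 i7 e7 g7 h6 hq5 hq6 hq7 hd5 hd6 hd7 he5 he7 hg5 hg7
  have ch7 : 14 * g7 ≤ e6 + e8 := chg3 (c 6) (c 7) (c 8) i6 e6 g6 i7 e7 g7 i8 e8 g8 h7 hq6 hq7 hq8 hd6 hd7 hd8 he6 he8 hg6 hg8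
  have ch8 : 14 * g8 ≤ e7 + e9 := chg3 (c 7) (c 8) (c 9) i7 e7 g7 i8 e8 g8 i9 e9 g9 h8 hq7 hq8 hq9 hd7 hd8 hd9 he7 he9 hg7 hg9
  have ch9 : 14 * g9 ≤ e8 + e10 := chg3 (c 8) (c 9) (c 10) i8 e8 g8 i9 e9 g9 i10 e10 g10 h9 hq8 hq9 hq10 hd8 hd9 hd10 he8 he10 hg8 hg10
  have ch10 : 14 * g10 ≤ e9 + e11 := chg3 (c 9) (c 10) (c 11) i9 e9 g9 i10 e10 g10 i11 e11 g11 h10 hq9 hq10 hq11 hd9 hd10 hd11 he9 he11 hg9 hg11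
  have ch11 : 14 * g11 ≤ e10 + e12 := chg3 (c 10) (c 11) (c 12) i10 e10 g10 i11 e11 g11 i12 e12 g12 h11 hq10 hq11 hq12 hd10 hd11 hd12 he10 he12 hg10 hg12
  have ch12 : 14 * g12 ≤ e11 + e13 := chg3 (c 11) (c 12) (c 13) i11 e11 g11 i12 e12 g12 i13 e13 g13 h12 hq11 hq12 hq13 hd11 hd12 hd13 he11 he13 hg11 hg13
  have ch13 : 14 * g13 ≤ e12 + e14 := chg3 (c 12) (c 13) (c 14) i12 e12 g12 i13 e13 g13 i14 e14 g14 h13 hq12 hq13 hq14 hd12 hd13 hd14 he12 he14 hg12 hg14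
  have ch14 : 14 * g14 ≤ e13 + e15 := chg3 (c 13) (c 14) (c 15) i13 e13 g13 i14 e14 g14 i15 e15 g15 h14 hq13 hq14 hq15 hd13 hd14 hd15 he13 he15 hg13 hg15
  have ch15 : 14 * g15 ≤ e14 + e16 := chg3 (c 14) (c 15) (c 16) i14 e14 g14 i15 e15 g15 i16 e16 g16 h15 hq14 hq15 hq16 hd14 hd15 hd16 he14 he16 hg14 hg16
  have ch16 : 14 * g16 ≤ e15 := chg16 (c 15) (c 16) i15 e15 g15 i16 e16 g16 h16 hq15 hq16 hd15 hd16 he15 hg15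
  have hI : (6 : ℤ) ≤ i0+i1+i2+i3+i4+i5+i6+i7+i8+i9+i10+i11+i12+i13+i14+i15+i16 := by linarith only [w0, w1, w2, w3, w4, w5]
  have hG : 14 * (g0+g1+g2+g3+g4+g5+g6+g7+g8+g9+g10+g11+g12+g13+g14+g15+g16) ≤ 2 * (e0+e1+e2+e3+e4+e5+e6+e7+e8+e9+e10+e11+e12+e13+e14+e15+e16) := by
    linarith only [ch0, ch1, ch2, ch3, ch4, ch5, ch6, ch7, ch8, ch9, ch10, ch11, ch12, ch13, ch14, ch15, ch16, he0, he16]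
  have hE : (0 : ℤ) ≤ e0+e1+e2+e3+e4+e5+e6+e7+e8+e9+e10+e11+e12+e13+e14+e15+e16 := by linarith only [he0, he1, he2, he3, he4, he5, he6, he7, he8, he9, he10, he11, he12, he13, he14, he15, he16]
  have hGn : (0 : ℤ) ≤ g0+g1+g2+g3+g4+g5+g6+g7+g8+g9+g10+g11+g12+g13+g14+g15+g16 := by linarith only [hg0, hg1, hg2, hg3, hg4, hg5, hg6, hg7, hg8, hg9, hg10, hg11, hg12, hg13, hg14, hg15, hg16]
  have hS : (17 * 1230752346353 : ℤ) - ((c 0 : ℤ)+(c 1 : ℤ)+(c 2 : ℤ)+(c 3 : ℤ)+(c 4 : ℤ)+(c 5 : ℤ)+(c 6 : ℤ)+(c 7 : ℤ)+(c 8 : ℤ)+(c 9 : ℤ)+(c 10 : ℤ)+(c 11 : ℤ)+(c 12 : ℤ)+(c 13 : ℤ)+(c 14 : ℤ)+(c 15 : ℤ)+(c 16 : ℤ)) = (i0+i1+i2+i3+i4+i5+i6+i7+i8+i9+i10+i11+i12+i13+i14+i15+i16) + (e0+e1+e2+e3+e4+e5+e6+e7+e8+e9+e10+e11+e12+e13+e14+e15+e16)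 - (g0+g1+g2+g3+g4+g5+g6+g7+g8+g9+g10+g11+g12+g13+g14+g15+g16) := by
    linarith only [hq0, hq1, hq2, hq3, hq4, hq5, hq6, hq7, hq8, hq9, hq10, hq11, hq12, hq13, hq14, hq15, hq16]
  have hfin := finish (c 0) (c 1) (c 2) (c 3) (c 4) (c 5) (c 6) (c 7) (c 8) (c 9) (c 10) (c 11) (c 12) (c 13) (c 14) (c 15) (c 16) _ _ _ hI hG hE hGn hS
  simp only [Finset.sum_range_succ, Finset.sum_range_zero, zero_add]
  exact hfin

end PermCode17

/-- every subset of `S_17` with pairwise Kendall τ-distance at least 3 has size at most `16! − 5`; that is, `P(17,3) ≤ 16! − 5`. -/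
theorem perm_code_dist3_card_le_seventeen (C : Finset (Equiv.Perm (Fin 17)))
    (hC : ∀ x ∈ C, ∀ y ∈ C, x ≠ y → 3 ≤ kendallDist x y) :
    C.card ≤ Nat.factorial 16 - 5 := by
  have hN : Nat.factorial 16 = 20922789888000 := by norm_num [Nat.factorial]
  rw [hN, ← PermCode17.sum_cc C]
  apply PermCode17.ip_bound
  · rw [← hN]; exact PermCode17.row_zero C hC
  · intro k hk1 hk15; rw [← hN]; exact PermCode17.row_int C hC k hk1 hk15
  · rw [← hN]; exact PermCode17.row_sixteen C hC
end
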